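/- arXiv:1204.2723 — 7 statements merged into one kernel-verified Lean document; each statement's English description precedes it below -/
import Mathlib

section
/- Let u ∈ C([0,1]) be the piecewise linear function u(t) = max(0, 2t − 1). Then 𝔅̄₂u(1/4) = 1/π − 1/4. In particular, since B₂u(1/4) = 1/16 and S_{Δ₂}u = u, one has (𝔅̄₂ ∘ S_{Δ₂})u(1/4) ≠ B₂u(1/4), so the operator 𝔅̄₂ ∘ S_{Δ₂} is not equal to the Bernstein operator B₂. -/
open MeasureTheory Finset

/-- The Beta operator of Mühlbach and Lupaş on `C[0,1]`. -/
noncomputable def betaOp (n : ℕ) (f : ℝ → ℝ) (x : ℝ) : ℝ :=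
  if x = 0 then f 0
  else if x = 1 then f 1
  else (∫ t in (0:ℝ)..1, t ^ ((n:ℝ) * x - 1) * (1 - t) ^ ((n:ℝ) * (1 - x) - 1) * f t) /
       (∫ t in (0:ℝ)..1, t ^ ((n:ℝ) * x - 1) * (1 - t) ^ ((n:ℝ) * (1 - x) - 1))

/-- The Bernstein operator. -/
noncomputable def bernsteinOp (n : ℕ) (f : ℝ → ℝ) (x : ℝ) : ℝ :=
  ∑ k ∈ Finset.range (n + 1), f ((k : ℝ) / n) * (n.choose k) * x ^ k * (1 - x) ^ (n - k)

/-- The hat function `u_{n,i}` of the piecewise linear interpolation at the nodes `j/n`. -/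
noncomputable def hatFn (n i : ℕ) (x : ℝ) : ℝ := max 0 (1 - |(n : ℝ) * x - i|)

/-- Piecewise linear interpolation at the nodes `0, 1/n, …, 1`. -/
noncomputable def piecewiseLinOp (n : ℕ) (f : ℝ → ℝ) (x : ℝ) : ℝ :=
  ∑ i ∈ Finset.range (n + 1), f ((i : ℝ) / n) * hatFn n i x


-- rpow to sqrt conversion on (0,1)
lemma rpow_to_sqrt {t : ℝ} (ht : 0 < t) :
    t ^ (-(1/2) : ℝ) * (1 - t) ^ ((1/2) : ℝ) = Real.sqrt (1-t) / Real.sqrt t := by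
  rw [Real.rpow_neg ht.le, ← Real.sqrt_eq_rpow, ← Real.sqrt_eq_rpow, div_eq_mul_inv]
  ring

-- integrability
lemma II_main (g : ℝ → ℝ) (hg : Measurable g) (hb : ∀ t ∈ Set.Ioc (0:ℝ) 1, |g t| ≤ 1) :
    IntervalIntegrable (fun t => t ^ (-(1/2):ℝ) * (1-t) ^ ((1/2):ℝ) * g t) volume 0 1 := by
  apply (intervalIntegral.intervalIntegrable_rpow' (r := -(1/2)) (by norm_num)).mono_fun
  · apply Measurable.aestronglyMeasurable
    exact ((measurable_id.pow_const _).mul ((measurable_const.sub measurable_id).pow_const _)).mul hg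
  · rw [Set.uIoc_of_le (by norm_num : (0:ℝ) ≤ 1)]
    filter_upwards [ae_restrict_mem measurableSet_Ioc] with t ht
    have h0 : 0 ≤ (1-t) ^ ((1/2):ℝ) := Real.rpow_nonneg (by linarith [ht.2]) _
    have h1 : (1-t) ^ ((1/2):ℝ) ≤ 1 :=
      Real.rpow_le_one (by linarith [ht.2]) (by linarith [ht.1]) (by norm_num)
    simp only [Real.norm_eq_abs]
    calc |t ^ (-(1/2):ℝ) * (1-t) ^ ((1/2):ℝ) * g t|
        = |t ^ (-(1/2):ℝ)| * ((1-t) ^ ((1/2):ℝ) * |g t|) := by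
          rw [abs_mul, abs_mul, abs_of_nonneg h0]; ring
      _ ≤ |t ^ (-(1/2):ℝ)| * 1 := by
          gcongr
          exact mul_le_one₀ h1 (abs_nonneg _) (hb t ht)
      _ = |t ^ (-(1/2):ℝ)| := mul_one _

lemma sqrt_prod_deriv {t : ℝ} (h0 : 0 < t) (h1 : t < 1) :
    HasDerivAt (fun s : ℝ => Real.sqrt (s*(1-s))) ((1/(2*Real.sqrt (t*(1-t)))) * (1-2*t)) t := by
  have hp : HasDerivAt (fun s : ℝ => s*(1-s)) (1-2*t) t := by
    have := (hasDerivAt_id t).mul ((hasDerivAt_const t (1:ℝ)).sub (hasDerivAt_id t))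
    exact this.congr_deriv (by simp; ring)
  exact (Real.hasDerivAt_sqrt (ne_of_gt (by nlinarith : (0:ℝ) < t*(1-t)))).comp t hp

lemma arcsin_sqrt_deriv {t : ℝ} (h0 : 0 < t) (h1 : t < 1) :
    HasDerivAt (fun s : ℝ => Real.arcsin (Real.sqrt s))
      ((1/Real.sqrt (1 - t)) * (1/(2*Real.sqrt t))) t := by
  have hs : HasDerivAt (fun s : ℝ => Real.sqrt s) (1/(2*Real.sqrt t)) t :=
    Real.hasDerivAt_sqrt h0.ne'
  have ha : HasDerivAt Real.arcsin (1/Real.sqrt (1 - Real.sqrt t ^ 2)) (Real.sqrt t) :=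
    Real.hasDerivAt_arcsin (by intro hc; have := Real.sqrt_nonneg t; rw [hc] at this; linarith) (by
      have : Real.sqrt t < 1 := by
        rw [show (1:ℝ) = Real.sqrt 1 by simp]
        exact Real.sqrt_lt_sqrt h0.le h1
      linarith)
  have := ha.comp t hs
  rwa [Real.sq_sqrt h0.le] at this

lemma denom_eval :
    ∫ t in (0:ℝ)..1, t ^ (-(1/2):ℝ) * (1-t) ^ ((1/2):ℝ) = Real.pi / 2 := by
  have key := intervalIntegral.integral_eq_sub_of_hasDeriv_right_of_le
    (f := fun t => Real.arcsin (Real.sqrt t) + Real.sqrt (t*(1-t)))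
    (f' := fun t => t ^ (-(1/2):ℝ) * (1-t) ^ ((1/2):ℝ))
    (by norm_num : (0:ℝ) ≤ 1)
    (((Real.continuous_arcsin.comp Real.continuous_sqrt).add (Real.continuous_sqrt.comp (by continuity))).continuousOn)
    (fun t ht => by
      have h0 := ht.1; have h1 := ht.2
      have ha := arcsin_sqrt_deriv h0 h1
      have hb := sqrt_prod_deriv h0 h1
      have hd := ha.add hb
      have heq : (1/Real.sqrt (1 - t)) * (1/(2*Real.sqrt t)) +
          (1/(2*Real.sqrt (t*(1-t)))) * (1-2*t)
          = t ^ (-(1/2):ℝ) * (1-t) ^ ((1/2):ℝ) := by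
        rw [rpow_to_sqrt h0, Real.sqrt_mul h0.le]
        have hA : (0:ℝ) < Real.sqrt t := Real.sqrt_pos.2 h0
        have hB : (0:ℝ) < Real.sqrt (1-t) := Real.sqrt_pos.2 (by linarith)
        have hA2 : Real.sqrt t ^ 2 = t := Real.sq_sqrt h0.le
        have hB2 : Real.sqrt (1-t) ^ 2 = 1 - t := Real.sq_sqrt (by linarith)
        field_simp
        linear_combination (-2) * hB2
      rw [heq] at hd
      exact hd.hasDerivWithinAt)
    (by
      have := II_main (fun _ => 1) measurable_const (by intro t ht; norm_num)
      simpa using this)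
  rw [key]
  norm_num [Real.arcsin_one]

lemma sqrt_half : Real.sqrt (1/2) = Real.sqrt 2 / 2 := by
  rw [show (1/2:ℝ) = (Real.sqrt 2 / 2)^2 by
    rw [div_pow, Real.sq_sqrt (by norm_num : (0:ℝ) ≤ 2)]; norm_num]
  exact Real.sqrt_sq (by positivity)

lemma arcsin_sqrt_half : Real.arcsin (Real.sqrt (1/2)) = Real.pi / 4 := by
  rw [sqrt_half, ← Real.sin_pi_div_four]
  exact Real.arcsin_sin (by linarith [Real.pi_pos]) (by linarith [Real.pi_pos])

lemma num_eval :
    ∫ t in (1/2:ℝ)..1, t ^ (-(1/2):ℝ) * (1-t) ^ ((1/2):ℝ) * (2*t-1)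
      = 1/2 - Real.pi/8 := by
  have key := intervalIntegral.integral_eq_sub_of_hasDeriv_right_of_le
    (f := fun t => (t-1/2)*Real.sqrt (t*(1-t)) + (1/4)*Real.arcsin (2*t-1)
      - Real.arcsin (Real.sqrt t) - Real.sqrt (t*(1-t)))
    (f' := fun t => t ^ (-(1/2):ℝ) * (1-t) ^ ((1/2):ℝ) * (2*t-1))
    (by norm_num : (1/2:ℝ) ≤ 1)
    (by
      apply Continuous.continuousOn
      have c1 : Continuous fun t : ℝ => Real.sqrt (t*(1-t)) :=
        Real.continuous_sqrt.comp (by continuity)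
      have c2 : Continuous fun t : ℝ => Real.arcsin (2*t-1) :=
        Real.continuous_arcsin.comp (by continuity)
      have c3 : Continuous fun t : ℝ => Real.arcsin (Real.sqrt t) :=
        Real.continuous_arcsin.comp Real.continuous_sqrt
      continuity)
    (fun t ht => by
      have h0 : (0:ℝ) < t := by linarith [ht.1]
      have h1 : t < 1 := ht.2
      have hhalf : (1/2:ℝ) < t := ht.1
      have hA : (0:ℝ) < Real.sqrt t := Real.sqrt_pos.2 h0
      have hB : (0:ℝ) < Real.sqrt (1-t) := Real.sqrt_pos.2 (by linarith)
      have hA2 : Real.sqrt t ^ 2 = t := Real.sq_sqrt h0.le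
      have hB2 : Real.sqrt (1-t) ^ 2 = 1 - t := Real.sq_sqrt (by linarith)
      have hsq := sqrt_prod_deriv h0 h1
      have hlin : HasDerivAt (fun s : ℝ => 2*s-1) 2 t := by
        simpa using ((hasDerivAt_id t).const_mul (2:ℝ)).sub_const 1
      have harc2 : HasDerivAt (fun s : ℝ => Real.arcsin (2*s-1))
          ((1/Real.sqrt (1-(2*t-1)^2)) * 2) t :=
        (Real.hasDerivAt_arcsin (by nlinarith) (by nlinarith)).comp t hlin
      have hprod : HasDerivAt (fun s : ℝ => (s-1/2)*Real.sqrt (s*(1-s)))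
          (1 * Real.sqrt (t*(1-t)) + (t-1/2)*((1/(2*Real.sqrt (t*(1-t)))) * (1-2*t))) t :=
        ((hasDerivAt_id t).sub_const (1/2:ℝ)).mul hsq
      have harcs := arcsin_sqrt_deriv h0 h1
      have hd := ((hprod.add (harc2.const_mul (1/4:ℝ))).sub harcs).sub hsq
      have hroot : Real.sqrt (1-(2*t-1)^2) = 2*(Real.sqrt t * Real.sqrt (1-t)) := by
        rw [show 1-(2*t-1)^2 = (2*(Real.sqrt t * Real.sqrt (1-t)))^2 by nlinarith]
        exact Real.sqrt_sq (by positivity)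
      have heq : 1 * Real.sqrt (t*(1-t)) + (t-1/2)*((1/(2*Real.sqrt (t*(1-t)))) * (1-2*t))
          + (1/4) * ((1/Real.sqrt (1-(2*t-1)^2)) * 2)
          - (1/Real.sqrt (1 - t)) * (1/(2*Real.sqrt t))
          - (1/(2*Real.sqrt (t*(1-t)))) * (1-2*t)
          = t ^ (-(1/2):ℝ) * (1-t) ^ ((1/2):ℝ) * (2*t-1) := by
        rw [rpow_to_sqrt h0, Real.sqrt_mul h0.le, hroot]
        have hAB : Real.sqrt t * Real.sqrt (1-t) ≠ 0 := by positivity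
        field_simp
        linear_combination (16*Real.sqrt (1-t)^2) * hA2
          + (16*(1-t)) * hB2
      rw [heq] at hd
      exact hd.hasDerivWithinAt)
    (by
      have := II_main (fun t => 2*t-1) ((measurable_id.const_mul (2:ℝ)).sub_const 1)
        (by intro t ht; have h1 := ht.1; have h2 := ht.2; rw [abs_le]; exact ⟨by linarith, by linarith⟩)
      exact this.mono_set (by rw [Set.uIcc_of_le, Set.uIcc_of_le] <;> norm_num
        <;> exact Set.Icc_subset_Icc (by norm_num) le_rfl))
  rw [key]
  rw [show (1:ℝ)*(1-1) = 0 by ring, show (1:ℝ)/2*(1-1/2) = (1/2)^2 by norm_num,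
    Real.sqrt_zero, Real.sqrt_sq (by norm_num : (0:ℝ) ≤ 1/2), Real.sqrt_one,
    show 2*(1:ℝ)-1 = 1 by ring, show 2*(1/2:ℝ)-1 = 0 by ring,
    Real.arcsin_one, Real.arcsin_zero, arcsin_sqrt_half]
  ring

lemma num_full :
    ∫ t in (0:ℝ)..1, t ^ (-(1/2):ℝ) * (1-t) ^ ((1/2):ℝ) * max 0 (2*t-1)
      = 1/2 - Real.pi/8 := by
  have hmeas : Measurable fun t : ℝ => max 0 (2*t-1) :=
    measurable_const.max ((measurable_id.const_mul (2:ℝ)).sub_const 1)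
  have hbd : ∀ t ∈ Set.Ioc (0:ℝ) 1, |max 0 (2*t-1)| ≤ 1 := by
    intro t ht
    rw [abs_of_nonneg (le_max_left _ _)]
    exact max_le (by norm_num) (by linarith [ht.2])
  have hI := II_main _ hmeas hbd
  have hI1 : IntervalIntegrable
      (fun t => t ^ (-(1/2):ℝ) * (1-t) ^ ((1/2):ℝ) * max 0 (2*t-1)) volume 0 (1/2) :=
    hI.mono_set (by
      rw [Set.uIcc_of_le (by norm_num : (0:ℝ) ≤ 1/2), Set.uIcc_of_le (by norm_num : (0:ℝ) ≤ 1)]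
      exact Set.Icc_subset_Icc le_rfl (by norm_num))
  have hI2 : IntervalIntegrable
      (fun t => t ^ (-(1/2):ℝ) * (1-t) ^ ((1/2):ℝ) * max 0 (2*t-1)) volume (1/2) 1 :=
    hI.mono_set (by
      rw [Set.uIcc_of_le (by norm_num : (1/2:ℝ) ≤ 1), Set.uIcc_of_le (by norm_num : (0:ℝ) ≤ 1)]
      exact Set.Icc_subset_Icc (by norm_num) le_rfl)
  rw [← intervalIntegral.integral_add_adjacent_intervals hI1 hI2]
  have e1 : ∫ t in (0:ℝ)..(1/2), t ^ (-(1/2):ℝ) * (1-t) ^ ((1/2):ℝ) * max 0 (2*t-1) = 0 := by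
    rw [intervalIntegral.integral_congr (g := fun _ => (0:ℝ))]
    · simp
    · intro t ht
      rw [Set.uIcc_of_le (by norm_num : (0:ℝ) ≤ 1/2)] at ht
      have : max 0 (2*t-1) = 0 := max_eq_left (by linarith [ht.2])
      simp only [this, mul_zero]
  have e2 : ∫ t in (1/2:ℝ)..1, t ^ (-(1/2):ℝ) * (1-t) ^ ((1/2):ℝ) * max 0 (2*t-1)
      = 1/2 - Real.pi/8 := by
    rw [intervalIntegral.integral_congr
      (g := fun t => t ^ (-(1/2):ℝ) * (1-t) ^ ((1/2):ℝ) * (2*t-1))]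
    · exact num_eval
    · intro t ht
      rw [Set.uIcc_of_le (by norm_num : (1/2:ℝ) ≤ 1)] at ht
      have : max 0 (2*t-1) = 2*t-1 := max_eq_right (by linarith [ht.1])
      simp only [this]
  rw [e1, e2]; ring


lemma beta_val : betaOp 2 (fun t => max 0 (2 * t - 1)) (1/4) = 1 / Real.pi - 1/4 := by
  simp only [betaOp, if_neg (by norm_num : ¬(1/4:ℝ) = 0), if_neg (by norm_num : ¬(1/4:ℝ) = 1)]
  have e1 : ((2:ℕ):ℝ) * (1/4) - 1 = -(1/2) := by norm_num
  have e2 : ((2:ℕ):ℝ) * (1 - 1/4) - 1 = (1/2) := by norm_num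
  rw [e1, e2, denom_eval, num_full]
  have hπ := Real.pi_pos
  field_simp
  ring

lemma plin_eq : ∀ t ∈ Set.Icc (0:ℝ) 1,
    piecewiseLinOp 2 (fun s => max 0 (2 * s - 1)) t = max 0 (2 * t - 1) := by
  intro t ht
  simp only [piecewiseLinOp, hatFn, Finset.sum_range_succ, Finset.sum_range_zero]
  norm_num
  rw [abs_of_nonpos (by linarith [ht.2] : 2*t - 2 ≤ 0)]
  congr 1
  ring

lemma bern_val : bernsteinOp 2 (fun t => max 0 (2 * t - 1)) (1/4) = 1/16 := by
  simp only [bernsteinOp, Finset.sum_range_succ, Finset.sum_range_zero]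
  norm_num


/-- For `u(t) = max(0, 2t-1)` one has `𝔅̄₂u(1/4) = 1/π - 1/4`; in particular
`𝔅̄₂ ∘ S_{Δ₂} ≠ B₂`. -/
theorem G2_ne_B2 :
    betaOp 2 (fun t => max 0 (2 * t - 1)) (1/4) = 1 / Real.pi - 1/4 ∧
    ¬ (∀ f : ℝ → ℝ, ContinuousOn f (Set.Icc 0 1) → ∀ x ∈ Set.Icc (0:ℝ) 1,
        betaOp 2 (piecewiseLinOp 2 f) x = bernsteinOp 2 f x) := by
  refine ⟨beta_val, ?_⟩
  intro h
  have hc : ContinuousOn (fun t : ℝ => max 0 (2 * t - 1)) (Set.Icc 0 1) :=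
    (continuous_const.max (by continuity)).continuousOn
  have heq := h _ hc (1/4) (by norm_num)
  have hB : betaOp 2 (piecewiseLinOp 2 (fun t => max 0 (2 * t - 1))) (1/4)
      = betaOp 2 (fun t => max 0 (2 * t - 1)) (1/4) := by
    simp only [betaOp, if_neg (by norm_num : ¬(1/4:ℝ) = 0), if_neg (by norm_num : ¬(1/4:ℝ) = 1)]
    congr 1
    apply intervalIntegral.integral_congr
    intro t ht
    rw [Set.uIcc_of_le (by norm_num : (0:ℝ) ≤ 1)] at ht
    simp only [plin_eq t ht]
  rw [hB, beta_val, bern_val] at heq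
  have hπ := Real.pi_pos
  have h315 := Real.pi_lt_d2
  field_simp at heq
  nlinarith
end

section
/- Let n ≥ 2. There is no kernel K : [0,1]² → ℝ with K ≥ 0 on [0,1]² and t ↦ K(x,t) Lebesgue integrable on [0,1] for every x ∈ [0,1], such that the integral operator Lf(x) = ∫₀¹ K(x,t) f(t) dt satisfies L(S_{Δₙ}f)(x) = Bₙf(x) for all f ∈ C([0,1]) and all x ∈ [0,1]. -/
open MeasureTheory Finset

lemma bern_at_one (n : ℕ) (hn : n ≠ 0) (f : ℝ → ℝ) : bernsteinOp n f 1 = f 1 := by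
  unfold bernsteinOp
  rw [Finset.sum_eq_single_of_mem n (Finset.self_mem_range_succ n)]
  · have : ((n : ℝ) / n) = 1 := div_self (by exact_mod_cast hn)
    simp [this]
  · intro b hb hbn
    have : 0 < n - b := Nat.sub_pos_of_lt (lt_of_le_of_ne (Nat.lt_succ_iff.mp (Finset.mem_range.mp hb)) hbn)
    simp [zero_pow this.ne']

lemma hat_nonneg (n i : ℕ) (x : ℝ) : 0 ≤ hatFn n i x := le_max_left _ _

lemma pl_nonneg (n : ℕ) (x : ℝ) : 0 ≤ piecewiseLinOp n (fun s => 1 - s) x := by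
  apply Finset.sum_nonneg
  intro i hi
  have hi' : (i : ℝ) ≤ n := by exact_mod_cast Nat.lt_succ_iff.mp (Finset.mem_range.mp hi)
  have hn : (0:ℝ) ≤ n := (Nat.cast_nonneg n : (0:ℝ) ≤ n)
  have : (i : ℝ) / n ≤ 1 := by
    rcases eq_or_lt_of_le hn with h | h
    · simp [← h]
    · exact (div_le_one h).2 hi'
  exact mul_nonneg (by linarith) (hat_nonneg _ _ _)

lemma pl_pos (n : ℕ) (hn : 1 ≤ n) {t : ℝ} (ht : t ∈ Set.Ioo (0:ℝ) 1) :
    0 < piecewiseLinOp n (fun s => 1 - s) t := by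
  obtain ⟨ht0, ht1⟩ := ht
  have hnR : (0:ℝ) < n := by exact_mod_cast hn
  set i := Nat.floor ((n:ℝ) * t) with hi
  have hnt0 : (0:ℝ) ≤ (n:ℝ) * t := by positivity
  have hilt : i < n := by
    rw [hi, Nat.floor_lt hnt0]
    calc (n:ℝ) * t < n * 1 := by nlinarith
    _ = n := mul_one _
  refine Finset.sum_pos' (fun j hj => ?_) ⟨i, Finset.mem_range.mpr (hilt.trans (Nat.lt_succ_self n)), ?_⟩
  · -- nonneg of each term
    have hj' : (j : ℝ) ≤ n := by exact_mod_cast Nat.lt_succ_iff.mp (Finset.mem_range.mp hj)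
    have : (j : ℝ) / n ≤ 1 := (div_le_one hnR).2 hj'
    exact mul_nonneg (by linarith) (hat_nonneg _ _ _)
  · -- positivity of term i
    have hle : (i:ℝ) ≤ (n:ℝ) * t := Nat.floor_le hnt0
    have hlt : (n:ℝ) * t < i + 1 := Nat.lt_floor_add_one _
    have hhat : 0 < hatFn n i t := by
      have habs : |(n:ℝ) * t - i| < 1 := by
        rw [abs_lt]; constructor <;> linarith
      exact lt_max_of_lt_right (by linarith)
    have hcoef : (0:ℝ) < 1 - i / n := by
      have : (i:ℝ) < n := by exact_mod_cast hilt
      have : (i:ℝ) / n < 1 := (div_lt_one hnR).2 this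
      linarith
    exact mul_pos hcoef hhat

lemma pl_continuous (n : ℕ) (f : ℝ → ℝ) : Continuous (piecewiseLinOp n f) := by
  unfold piecewiseLinOp hatFn
  exact continuous_finset_sum _ fun i _ => continuous_const.mul
    (continuous_const.max ((continuous_const.sub
      ((continuous_const.mul continuous_id).sub continuous_const).abs)))

/-- No positive integral operator `L` satisfies `L ∘ S_{Δₙ} = Bₙ`. -/
theorem no_integral_operator_factorization (n : ℕ) (hn : 2 ≤ n) :
    ¬ ∃ K : ℝ → ℝ → ℝ,
        (∀ x ∈ Set.Icc (0:ℝ) 1, ∀ t ∈ Set.Icc (0:ℝ) 1, 0 ≤ K x t) ∧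
        (∀ x ∈ Set.Icc (0:ℝ) 1, IntegrableOn (K x) (Set.Icc (0:ℝ) 1)) ∧
        (∀ f : ℝ → ℝ, ContinuousOn f (Set.Icc 0 1) → ∀ x ∈ Set.Icc (0:ℝ) 1,
          (∫ t in (0:ℝ)..1, K x t * piecewiseLinOp n f t) = bernsteinOp n f x) := by
  rintro ⟨K, hK0, hKint, hKeq⟩
  have hn0 : n ≠ 0 := by omega
  have h1mem : (1:ℝ) ∈ Set.Icc (0:ℝ) 1 := by norm_num
  have hc1 : ContinuousOn (fun s : ℝ => 1 - s) (Set.Icc 0 1) :=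
    (continuous_const.sub continuous_id).continuousOn
  have h1 := hKeq (fun s => 1 - s) hc1 1 h1mem
  have h2 := hKeq (fun _ => 1) continuousOn_const 1 h1mem
  rw [bern_at_one n hn0] at h1 h2
  simp only [sub_self] at h1
  -- integrability of K 1 on the interval
  have hKI : IntervalIntegrable (K 1) volume 0 1 := by
    rw [intervalIntegrable_iff_integrableOn_Ioc_of_le (by norm_num)]
    exact (hKint 1 h1mem).mono_set Set.Ioc_subset_Icc_self
  have hI1 : IntervalIntegrable (fun t => K 1 t * piecewiseLinOp n (fun s => 1 - s) t)
      volume 0 1 :=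
    hKI.mul_continuousOn (pl_continuous n _).continuousOn
  -- nonnegativity a.e.
  have hnonneg : 0 ≤ᵐ[volume.restrict (Set.Ioc (0:ℝ) 1)]
      fun t => K 1 t * piecewiseLinOp n (fun s => 1 - s) t := by
    refine (ae_restrict_iff' measurableSet_Ioc).2 (Filter.Eventually.of_forall fun t ht => ?_)
    exact mul_nonneg (hK0 1 h1mem t (Set.Ioc_subset_Icc_self ht)) (pl_nonneg n t)
  have hzero := (intervalIntegral.integral_eq_zero_iff_of_le_of_nonneg_ae (by norm_num)
    hnonneg hI1).mp h1
  -- a.e. t ≠ 1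
  have h1z : (volume.restrict (Set.Ioc (0:ℝ) 1)) {(1:ℝ)} = 0 :=
    le_antisymm ((Measure.restrict_apply_le _ _).trans_eq (measure_singleton 1)) zero_le
  have hne : ∀ᵐ t ∂(volume.restrict (Set.Ioc (0:ℝ) 1)), t ≠ 1 := by
    rw [ae_iff]
    exact measure_mono_null (fun t ht => by simpa using ht) h1z
  have hmem : ∀ᵐ t ∂(volume.restrict (Set.Ioc (0:ℝ) 1)), t ∈ Set.Ioc (0:ℝ) 1 :=
    ae_restrict_mem measurableSet_Ioc
  have hfinal : (fun t => K 1 t * piecewiseLinOp n (fun _ : ℝ => (1:ℝ)) t)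
      =ᵐ[volume.restrict (Set.Ioc (0:ℝ) 1)] 0 := by
    filter_upwards [hzero, hne, hmem] with t h0 htne htm
    have ht' : t ∈ Set.Ioo (0:ℝ) 1 := ⟨htm.1, lt_of_le_of_ne htm.2 htne⟩
    have hpos := pl_pos n (by omega) ht'
    have hK1 : K 1 t = 0 := by
      rcases mul_eq_zero.mp h0 with h | h
      · exact h
      · exact absurd h hpos.ne'
    simp [hK1]
  have : (∫ t in (0:ℝ)..1, K 1 t * piecewiseLinOp n (fun _ : ℝ => (1:ℝ)) t) = 0 := by
    rw [intervalIntegral.integral_of_le (by norm_num)]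
    rw [integral_congr_ae hfinal]
    simp
  rw [h2] at this
  norm_num at this
end

section
/- For every integer n ≥ 1, the Beta operator 𝔅̄ₙ : C([0,1]) → C([0,1]) is injective: if f ∈ C([0,1]) satisfies 𝔅̄ₙf(x) = 0 for all x ∈ [0,1], then f = 0. -/
open MeasureTheory

open MeasureTheory Set Filter Topology


section BetaAux

/-- Real beta-type integrability on `Ioo 0 1`. -/
lemma betaReal_integrableOn {a b : ℝ} (ha : 0 < a) (hb : 0 < b) :
    IntegrableOn (fun t : ℝ => t ^ (a - 1) * (1 - t) ^ (b - 1)) (Set.Ioo 0 1) := by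
  have h := Complex.betaIntegral_convergent (u := (a:ℂ)) (v := (b:ℂ))
    (by simpa using ha) (by simpa using hb)
  have h2 : IntegrableOn (fun x : ℝ => (x:ℂ) ^ ((a:ℂ) - 1) * (1 - (x:ℂ)) ^ ((b:ℂ) - 1))
      (Set.Ioo 0 1) :=
    (intervalIntegrable_iff_integrableOn_Ioo_of_le (by norm_num)).mp h
  refine IntegrableOn.congr_fun h2.norm ?_ measurableSet_Ioo
  intro t ht
  obtain ⟨ht0, ht1⟩ := ht
  have h1t : (0:ℝ) < 1 - t := by linarith
  simp only [norm_mul]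
  rw [Complex.norm_cpow_eq_rpow_re_of_pos ht0,
    show (1 - (t:ℂ)) = ((1 - t : ℝ) : ℂ) by push_cast; ring,
    Complex.norm_cpow_eq_rpow_re_of_pos h1t]
  simp

/-- The logistic map. -/
noncomputable def sigm (u : ℝ) : ℝ := Real.exp u / (1 + Real.exp u)

lemma sigm_pos (u : ℝ) : 0 < sigm u := by
  have := Real.exp_pos u
  unfold sigm; positivity

lemma sigm_lt_one (u : ℝ) : sigm u < 1 := by
  have h := Real.exp_pos u
  rw [sigm, div_lt_one (by linarith)]; linarith

lemma one_sub_sigm (u : ℝ) : 1 - sigm u = 1 / (1 + Real.exp u) := by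
  have h := Real.exp_pos u
  rw [sigm]; field_simp; ring

lemma sigm_div (u : ℝ) : sigm u / (1 - sigm u) = Real.exp u := by
  have h := Real.exp_pos u
  rw [one_sub_sigm, sigm]
  field_simp

lemma sigm_hasDerivAt (u : ℝ) : HasDerivAt sigm (sigm u * (1 - sigm u)) u := by
  have h : (0:ℝ) < 1 + Real.exp u := by have := Real.exp_pos u; linarith
  have := (Real.hasDerivAt_exp u).div ((hasDerivAt_const u (1:ℝ)).add (Real.hasDerivAt_exp u))
    (ne_of_gt h)
  have e : sigm u * (1 - sigm u) = (Real.exp u * (((fun x => (1:ℝ)) + Real.exp : ℝ → ℝ) u) -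
      Real.exp u * (0 + Real.exp u)) / (((fun x => (1:ℝ)) + Real.exp : ℝ → ℝ) u) ^ 2 := by
    rw [one_sub_sigm, sigm]; simp only [Pi.add_apply]; field_simp; ring
  rw [e]; exact this

lemma sigm_injective : Function.Injective sigm := by
  intro u v huv
  have := sigm_div u
  rw [huv, sigm_div v] at this
  exact Real.exp_injective this.symm

lemma sigm_range : Set.range sigm = Set.Ioo 0 1 := by
  ext t
  constructor
  · rintro ⟨u, rfl⟩
    exact ⟨sigm_pos u, sigm_lt_one u⟩
  · rintro ⟨ht0, ht1⟩
    refine ⟨Real.log (t / (1 - t)), ?_⟩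
    have h1t : (0:ℝ) < 1 - t := by linarith
    have hpos : 0 < t / (1 - t) := by positivity
    rw [sigm, Real.exp_log hpos]
    field_simp; ring

lemma sigm_mul_le (u : ℝ) : sigm u * (1 - sigm u) ≤ Real.exp (-|u|) := by
  have h := Real.exp_pos u
  rw [one_sub_sigm, sigm]
  rcases le_or_gt 0 u with hu | hu
  · rw [abs_of_nonneg hu]
    have h1 : Real.exp u ≤ 1 + Real.exp u := by linarith
    calc Real.exp u / (1 + Real.exp u) * (1 / (1 + Real.exp u))
        ≤ Real.exp u / Real.exp u * (1 / Real.exp u) := by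
          gcongr <;> linarith
      _ = Real.exp (-u) := by rw [div_self (ne_of_gt h), one_mul, Real.exp_neg]; ring_nf
  · rw [abs_of_neg hu, neg_neg]
    calc Real.exp u / (1 + Real.exp u) * (1 / (1 + Real.exp u))
        ≤ Real.exp u / 1 * (1 / 1) := by gcongr <;> linarith
      _ = Real.exp u := by ring

/-- The complex-parameter beta-type transform. -/
noncomputable def Fz (n : ℕ) (f : ℝ → ℝ) (z : ℂ) : ℂ :=
  ∫ t in Set.Ioo (0:ℝ) 1, (t:ℂ) ^ (z - 1) * ((1 - t : ℝ) : ℂ) ^ ((n:ℂ) - z - 1) * (f t)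

lemma integrand_continuousOn {n : ℕ} {f : ℝ → ℝ} (hf : ContinuousOn f (Set.Icc 0 1)) (z : ℂ) :
    ContinuousOn (fun t : ℝ => (t:ℂ) ^ (z - 1) * ((1 - t : ℝ) : ℂ) ^ ((n:ℂ) - z - 1) * (f t))
      (Set.Ioo 0 1) := by
  intro t ht
  obtain ⟨ht0, ht1⟩ := ht
  have h1 : ContinuousAt (fun t : ℝ => (t:ℂ) ^ (z - 1)) t :=
    Complex.continuousAt_ofReal_cpow_const t (z - 1) (Or.inr (ne_of_gt ht0))
  have h2 : ContinuousAt (fun t : ℝ => ((1 - t : ℝ) : ℂ) ^ ((n:ℂ) - z - 1)) t := by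
    have := Complex.continuousAt_ofReal_cpow_const (1 - t) ((n:ℂ) - z - 1)
      (Or.inr (by intro hc; rw [sub_eq_zero] at hc; exact absurd hc.symm (ne_of_lt ht1)))
    exact this.comp ((continuous_const.sub continuous_id).continuousAt)
  have h3 : ContinuousWithinAt (fun t : ℝ => ((f t : ℝ) : ℂ)) (Set.Ioo 0 1) t :=
    (Complex.continuous_ofReal.comp_continuousOn
      (hf.mono Set.Ioo_subset_Icc_self)) t ⟨ht0, ht1⟩
  exact ((h1.continuousWithinAt.mul h2.continuousWithinAt).mul h3)

/-- `Fz` vanishes at real points of `(0, n)`, given the hypothesis on `betaOp`. -/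
lemma Fz_real_zero {n : ℕ} (hn : 1 ≤ n) {f : ℝ → ℝ} (hf : ContinuousOn f (Set.Icc 0 1))
    (h : ∀ x ∈ Set.Icc (0:ℝ) 1, betaOp n f x = 0)
    {s : ℝ} (hs : s ∈ Set.Ioo (0:ℝ) (n:ℝ)) : Fz n f ((s:ℝ) : ℂ) = 0 := by
  obtain ⟨hs0, hsn⟩ := hs
  have hnpos : (0:ℝ) < n := lt_trans hs0 hsn
  set x : ℝ := s / n with hx
  have hx0 : 0 < x := div_pos hs0 hnpos
  have hx1 : x < 1 := (div_lt_one hnpos).mpr hsn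
  have hnx : (n:ℝ) * x = s := by rw [hx]; field_simp
  have hnx' : (n:ℝ) * (1 - x) = n - s := by rw [mul_sub, hnx, mul_one]
  have hb := h x ⟨hx0.le, hx1.le⟩
  rw [betaOp, if_neg (ne_of_gt hx0), if_neg (ne_of_lt hx1), hnx, hnx'] at hb
  -- denominator positive
  have hden_ii : IntervalIntegrable (fun t : ℝ => t ^ (s - 1) * (1 - t) ^ ((n:ℝ) - s - 1))
      volume 0 1 := by
    rw [intervalIntegrable_iff_integrableOn_Ioo_of_le (by norm_num)]
    have := betaReal_integrableOn hs0 (by linarith : (0:ℝ) < n - s)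
    simpa [sub_sub] using this
  have hden_pos : 0 < ∫ t in (0:ℝ)..1, t ^ (s - 1) * (1 - t) ^ ((n:ℝ) - s - 1) := by
    apply intervalIntegral.intervalIntegral_pos_of_pos_on hden_ii
    · intro t ht
      have ht0 := ht.1
      have h1t : (0:ℝ) < 1 - t := by linarith [ht.2]
      positivity
    · norm_num
  have hnum : (∫ t in (0:ℝ)..1, t ^ (s - 1) * (1 - t) ^ ((n:ℝ) - s - 1) * f t) = 0 := by
    rcases div_eq_zero_iff.mp hb with h' | h'
    · exact h'
    · exact absurd h' (ne_of_gt hden_pos)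
  -- relate to Fz
  have key : Fz n f ((s:ℝ) : ℂ) =
      ((∫ t in Set.Ioo (0:ℝ) 1, t ^ (s - 1) * (1 - t) ^ ((n:ℝ) - s - 1) * f t : ℝ) : ℂ) := by
    rw [Fz, show ((∫ t in Set.Ioo (0:ℝ) 1, t ^ (s - 1) * (1 - t) ^ ((n:ℝ) - s - 1) * f t : ℝ) : ℂ)
      = ∫ t in Set.Ioo (0:ℝ) 1, ((t ^ (s - 1) * (1 - t) ^ ((n:ℝ) - s - 1) * f t : ℝ) : ℂ)
      from (integral_ofReal (𝕜 := ℂ)).symm]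
    apply setIntegral_congr_fun measurableSet_Ioo
    intro t ht
    obtain ⟨ht0, ht1⟩ := ht
    have h1t : (0:ℝ) < 1 - t := by linarith
    simp only []
    rw [Complex.ofReal_mul, Complex.ofReal_mul, Complex.ofReal_cpow ht0.le,
      Complex.ofReal_cpow h1t.le]
    push_cast
    ring
  rw [key]
  norm_cast
  rw [← integral_Ioc_eq_integral_Ioo, ← intervalIntegral.integral_of_le (by norm_num : (0:ℝ) ≤ 1)]
  exact hnum

lemma Fz_differentiableOn {n : ℕ} {f : ℝ → ℝ} (hf : ContinuousOn f (Set.Icc 0 1)) :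
    DifferentiableOn ℂ (Fz n f) {z : ℂ | 0 < z.re ∧ z.re < (n:ℝ)} := by
  obtain ⟨M, hM⟩ : ∃ M, ∀ t ∈ Set.Icc (0:ℝ) 1, |f t| ≤ M :=
    isCompact_Icc.exists_bound_of_continuousOn hf
  have hint : ∀ z : ℂ, 0 < z.re → z.re < n →
      IntegrableOn (fun t : ℝ => (t:ℂ) ^ (z - 1) * ((1 - t : ℝ) : ℂ) ^ ((n:ℂ) - z - 1) * (f t))
        (Set.Ioo 0 1) := by
    intro z h1 h2
    apply Integrable.mono'
      ((betaReal_integrableOn (a := z.re) (b := (n:ℝ) - z.re) h1 (by linarith)).const_mul M)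
      ((integrand_continuousOn hf z).aestronglyMeasurable measurableSet_Ioo)
    rw [ae_restrict_iff' measurableSet_Ioo]
    refine Eventually.of_forall fun t ht => ?_
    obtain ⟨ht0, ht1⟩ := ht
    have h1t : (0:ℝ) < 1 - t := by linarith
    have hft : |f t| ≤ M := hM t ⟨ht0.le, ht1.le⟩
    simp only [norm_mul, Complex.norm_real, Real.norm_eq_abs,
      Complex.norm_cpow_eq_rpow_re_of_pos ht0, Complex.norm_cpow_eq_rpow_re_of_pos h1t,
      Complex.sub_re, Complex.one_re, Complex.natCast_re]
    calc t ^ (z.re - 1) * (1 - t) ^ ((n:ℝ) - z.re - 1) * |f t|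
        ≤ t ^ (z.re - 1) * (1 - t) ^ ((n:ℝ) - z.re - 1) * M := by gcongr
      _ = M * (t ^ (z.re - 1) * (1 - t) ^ ((n:ℝ) - z.re - 1)) := by ring
  intro z₀ hz₀
  obtain ⟨hz0, hzn⟩ := hz₀
  set ε := min z₀.re ((n:ℝ) - z₀.re) / 2 with hε
  have hεmin : 0 < min z₀.re ((n:ℝ) - z₀.re) := lt_min hz0 (by linarith)
  have hε0 : 0 < ε := by positivity
  have hball : ∀ z ∈ Metric.ball z₀ ε, ε ≤ z.re ∧ z.re ≤ (n:ℝ) - ε := by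
    intro z hz
    have h1 : |z.re - z₀.re| ≤ ‖z - z₀‖ := by
      simpa using Complex.abs_re_le_norm (z - z₀)
    have h2 : ‖z - z₀‖ < ε := by rwa [Metric.mem_ball, Complex.dist_eq] at hz
    have h3 := abs_lt.mp (lt_of_le_of_lt h1 h2)
    have hm1 := min_le_left z₀.re ((n:ℝ) - z₀.re)
    have hm2 := min_le_right z₀.re ((n:ℝ) - z₀.re)
    constructor
    · have : 2 * ε ≤ z₀.re := by rw [hε]; linarith
      linarith [h3.1]
    · have : 2 * ε ≤ (n:ℝ) - z₀.re := by rw [hε]; linarith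
      linarith [h3.2]
  set B : ℝ → ℝ := fun t => M * (2/ε) *
    (t ^ (ε/2 - 1) * (1 - t) ^ (ε - 1) + t ^ (ε - 1) * (1 - t) ^ (ε/2 - 1)) with hB
  have hBint : IntegrableOn B (Set.Ioo 0 1) :=
    ((betaReal_integrableOn (by positivity) hε0).add
      (betaReal_integrableOn hε0 (by positivity))).const_mul (M * (2/ε))
  set F' : ℂ → ℝ → ℂ := fun z t =>
    ((Real.log t - Real.log (1 - t) : ℝ) : ℂ) *
      ((t:ℂ) ^ (z - 1) * ((1 - t : ℝ) : ℂ) ^ ((n:ℂ) - z - 1) * (f t)) with hF'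
  have hlog : ∀ x : ℝ, 0 < x → x ≤ 1 → |Real.log x| ≤ (2/ε) * x ^ (-(ε/2)) := by
    intro x hx hx1
    have hl : Real.log x ≤ 0 := Real.log_nonpos hx.le hx1
    rw [abs_of_nonpos hl]
    have hxp : 0 < x ^ (-(ε/2)) := Real.rpow_pos_of_pos hx _
    have h1 : -Real.log x = (2/ε) * Real.log (x ^ (-(ε/2))) := by
      rw [Real.log_rpow hx]
      field_simp
    rw [h1]
    have h2 : Real.log (x ^ (-(ε/2))) ≤ x ^ (-(ε/2)) :=
      (Real.log_le_sub_one_of_pos hxp).trans (by linarith)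
    exact mul_le_mul_of_nonneg_left h2 (by positivity)
  have main := hasDerivAt_integral_of_dominated_loc_of_deriv_le
    (μ := volume.restrict (Set.Ioo (0:ℝ) 1))
    (F := fun z t => (t:ℂ) ^ (z - 1) * ((1 - t : ℝ) : ℂ) ^ ((n:ℂ) - z - 1) * (f t))
    (F' := F') (x₀ := z₀) (bound := B) (Metric.ball_mem_nhds z₀ hε0)
    (Eventually.of_forall fun z =>
      ((integrand_continuousOn hf z).aestronglyMeasurable measurableSet_Ioo))
    (hint z₀ hz0 hzn)
    ?_ ?_ hBint ?_
  · exact main.2.differentiableAt.differentiableWithinAt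
  · -- measurability of F' z₀
    apply ContinuousOn.aestronglyMeasurable ?_ measurableSet_Ioo
    apply ContinuousOn.mul ?_ (integrand_continuousOn hf z₀)
    intro t ht
    apply ContinuousAt.continuousWithinAt
    apply Complex.continuous_ofReal.continuousAt.comp
    exact (Real.continuousAt_log (ne_of_gt ht.1)).sub
      ((Real.continuousAt_log (by intro hc; rw [sub_eq_zero] at hc; exact absurd hc.symm (ne_of_lt ht.2))).comp
        ((continuous_const.sub continuous_id).continuousAt))
  · -- bound
    rw [ae_restrict_iff' measurableSet_Ioo]
    refine Eventually.of_forall fun t hmem => ?_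
    intro z hz
    obtain ⟨ht0, ht1⟩ := hmem
    have h1t : (0:ℝ) < 1 - t := by linarith
    obtain ⟨hre1, hre2⟩ := hball z hz
    have hft : |f t| ≤ M := hM t ⟨ht0.le, ht1.le⟩
    have hM0 : 0 ≤ M := le_trans (abs_nonneg _) hft
    have hlog1 := hlog t ht0 ht1.le
    have hlog2 := hlog (1 - t) h1t (by linarith)
    have hP : t ^ (z.re - 1) ≤ t ^ (ε - 1) :=
      Real.rpow_le_rpow_of_exponent_ge ht0 ht1.le (by linarith)
    have hQ : (1 - t) ^ ((n:ℝ) - z.re - 1) ≤ (1 - t) ^ (ε - 1) :=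
      Real.rpow_le_rpow_of_exponent_ge h1t (by linarith) (by linarith)
    have key0 : |Real.log t - Real.log (1 - t)| ≤ |Real.log t| + |Real.log (1 - t)| := by
      rw [sub_eq_add_neg]
      exact (abs_add_le _ _).trans (by rw [abs_neg])
    have hnorm : ‖F' z t‖ = |Real.log t - Real.log (1 - t)| *
        (t ^ (z.re - 1) * ((1 - t) ^ ((n:ℝ) - z.re - 1) * |f t|)) := by
      simp only [hF', norm_mul, Complex.norm_real, Real.norm_eq_abs,
        Complex.norm_cpow_eq_rpow_re_of_pos ht0, Complex.norm_cpow_eq_rpow_re_of_pos h1t,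
        Complex.sub_re, Complex.one_re, Complex.natCast_re]
      ring
    rw [hnorm]
    calc |Real.log t - Real.log (1 - t)| *
          (t ^ (z.re - 1) * ((1 - t) ^ ((n:ℝ) - z.re - 1) * |f t|))
        ≤ ((2/ε) * t ^ (-(ε/2)) + (2/ε) * (1 - t) ^ (-(ε/2))) *
          (t ^ (ε - 1) * ((1 - t) ^ (ε - 1) * M)) := by
          have := key0.trans (add_le_add hlog1 hlog2)
          gcongr
      _ = B t := by
          simp only [hB]
          rw [show ε/2 - 1 = -(ε/2) + (ε - 1) by ring, Real.rpow_add ht0,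
            Real.rpow_add h1t]
          ring
  · -- differentiability
    rw [ae_restrict_iff' measurableSet_Ioo]
    refine Eventually.of_forall fun t hmem => ?_
    intro z hz
    obtain ⟨ht0, ht1⟩ := hmem
    have h1t : (0:ℝ) < 1 - t := by linarith
    have htne : (t:ℂ) ≠ 0 := by exact_mod_cast ne_of_gt ht0
    have h1tne : ((1 - t : ℝ):ℂ) ≠ 0 := by exact_mod_cast ne_of_gt h1t
    have hA : HasDerivAt (fun z : ℂ => (t:ℂ) ^ (z - 1))
        ((t:ℂ) ^ (z - 1) * Complex.log t) z := by
      have := ((hasDerivAt_id z).sub_const 1).const_cpow (c := (t:ℂ)) (Or.inl htne)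
      simpa using this
    have hB2 : HasDerivAt (fun z : ℂ => ((1 - t : ℝ):ℂ) ^ ((n:ℂ) - z - 1))
        (-(((1 - t : ℝ):ℂ) ^ ((n:ℂ) - z - 1) * Complex.log ((1 - t : ℝ):ℂ))) z := by
      have hd : HasDerivAt (fun z : ℂ => (n:ℂ) - z - 1) (-1) z := by
        simpa using ((hasDerivAt_id z).const_sub (n:ℂ)).sub_const 1
      have := hd.const_cpow (c := ((1 - t : ℝ):ℂ)) (Or.inl h1tne)
      convert this using 1
      ring
    have hprod := (hA.mul hB2).mul_const ((f t : ℝ) : ℂ)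
    refine hprod.congr_deriv ?_
    rw [hF']
    simp only []
    rw [Complex.ofReal_sub (Real.log t) (Real.log (1 - t)), ← Complex.ofReal_log ht0.le, ← Complex.ofReal_log h1t.le]
    ring

open scoped FourierTransform

lemma Fz_zero_on_strip {n : ℕ} (hn : 1 ≤ n) {f : ℝ → ℝ} (hf : ContinuousOn f (Set.Icc 0 1))
    (h : ∀ x ∈ Set.Icc (0:ℝ) 1, betaOp n f x = 0) :
    ∀ z ∈ {z : ℂ | 0 < z.re ∧ z.re < (n:ℝ)}, Fz n f z = 0 := by
  have hn0 : (0:ℝ) < n := Nat.cast_pos.mpr hn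
  have hS : IsOpen {z : ℂ | 0 < z.re ∧ z.re < (n:ℝ)} :=
    IsOpen.and (isOpen_lt continuous_const Complex.continuous_re)
      (isOpen_lt Complex.continuous_re continuous_const)
  have hconv : Convex ℝ {z : ℂ | 0 < z.re ∧ z.re < (n:ℝ)} := by
    have he : {z : ℂ | 0 < z.re ∧ z.re < (n:ℝ)} = Complex.reLm ⁻¹' (Set.Ioo 0 (n:ℝ)) := rfl
    rw [he]
    exact (convex_Ioo _ _).linear_preimage Complex.reLm
  have hanal : AnalyticOnNhd ℂ (Fz n f) {z : ℂ | 0 < z.re ∧ z.re < (n:ℝ)} :=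
    (Fz_differentiableOn hf).analyticOnNhd hS
  set c : ℂ := (((n:ℝ)/2 : ℝ) : ℂ) with hc
  have hcS : c ∈ {z : ℂ | 0 < z.re ∧ z.re < (n:ℝ)} := by
    constructor <;> simp only [hc, Complex.ofReal_re] <;> linarith
  have hseq : ∀ k : ℕ, ((n:ℝ)/2 + (n:ℝ)/(4*(k+1))) ∈ Set.Ioo (0:ℝ) (n:ℝ) := by
    intro k
    have hk1 : (0:ℝ) < 4*((k:ℝ)+1) := by positivity
    have hle : (n:ℝ)/(4*((k:ℝ)+1)) ≤ (n:ℝ)/4 := by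
      apply div_le_div_of_nonneg_left hn0.le (by norm_num)
      linarith [Nat.cast_nonneg (α := ℝ) k]
    constructor
    · positivity
    · have : (0:ℝ) < (n:ℝ)/(4*((k:ℝ)+1)) := by positivity
      linarith
  have htend : Tendsto (fun k : ℕ => ((((n:ℝ)/2 + (n:ℝ)/(4*((k:ℝ)+1)) : ℝ)) : ℂ))
      atTop (𝓝[≠] c) := by
    apply tendsto_nhdsWithin_of_tendsto_nhds_of_eventually_within
    · have hreal : Tendsto (fun k : ℕ => ((n:ℝ)/2 + (n:ℝ)/(4*((k:ℝ)+1)))) atTop (𝓝 ((n:ℝ)/2)) := by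
        have h2 : Tendsto (fun k : ℕ => (n:ℝ)/(4*((k:ℝ)+1))) atTop (𝓝 0) := by
          have h3 : Tendsto (fun k : ℕ => ((n:ℝ)/4) * (1/((k:ℝ)+1))) atTop (𝓝 (((n:ℝ)/4) * 0)) :=
            tendsto_const_nhds.mul tendsto_one_div_add_atTop_nhds_zero_nat
          simpa [div_eq_mul_inv, mul_comm, mul_assoc, mul_left_comm] using h3
        simpa using tendsto_const_nhds.add h2
      exact (Complex.continuous_ofReal.continuousAt.tendsto.comp hreal)
    · refine Eventually.of_forall fun k => ?_
      simp only [Set.mem_compl_iff, Set.mem_singleton_iff, hc]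
      intro hcontra
      have := Complex.ofReal_injective hcontra
      have hpos : (0:ℝ) < (n:ℝ)/(4*((k:ℝ)+1)) := by positivity
      linarith [this]
  have hfreq : ∃ᶠ z in 𝓝[≠] c, Fz n f z = 0 :=
    htend.frequently (Frequently.of_forall fun k => Fz_real_zero hn hf h (hseq k))
  exact hanal.eqOn_zero_of_preconnected_of_frequently_eq_zero hconv.isPreconnected hcS hfreq

lemma integrand_integrableOn {n : ℕ} {f : ℝ → ℝ} (hf : ContinuousOn f (Set.Icc 0 1))
    {z : ℂ} (h1 : 0 < z.re) (h2 : z.re < n) :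
    IntegrableOn (fun t : ℝ => (t:ℂ) ^ (z - 1) * ((1 - t : ℝ) : ℂ) ^ ((n:ℂ) - z - 1) * (f t))
      (Set.Ioo 0 1) := by
  obtain ⟨M, hM⟩ : ∃ M, ∀ t ∈ Set.Icc (0:ℝ) 1, |f t| ≤ M :=
    isCompact_Icc.exists_bound_of_continuousOn hf
  apply Integrable.mono'
    ((betaReal_integrableOn (a := z.re) (b := (n:ℝ) - z.re) h1 (by linarith)).const_mul M)
    ((integrand_continuousOn hf z).aestronglyMeasurable measurableSet_Ioo)
  rw [ae_restrict_iff' measurableSet_Ioo]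
  refine Eventually.of_forall fun t ht => ?_
  obtain ⟨ht0, ht1⟩ := ht
  have h1t : (0:ℝ) < 1 - t := by linarith
  have hft : |f t| ≤ M := hM t ⟨ht0.le, ht1.le⟩
  simp only [norm_mul, Complex.norm_real, Real.norm_eq_abs,
    Complex.norm_cpow_eq_rpow_re_of_pos ht0, Complex.norm_cpow_eq_rpow_re_of_pos h1t,
    Complex.sub_re, Complex.one_re, Complex.natCast_re]
  calc t ^ (z.re - 1) * (1 - t) ^ ((n:ℝ) - z.re - 1) * |f t|
      ≤ t ^ (z.re - 1) * (1 - t) ^ ((n:ℝ) - z.re - 1) * M := by gcongr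
    _ = M * (t ^ (z.re - 1) * (1 - t) ^ ((n:ℝ) - z.re - 1)) := by ring

lemma point_eq (n : ℕ) (f : ℝ → ℝ) (τ u : ℝ) :
    |sigm u * (1 - sigm u)| • ((sigm u : ℂ) ^ (((((n:ℝ)/2 : ℝ)):ℂ) + (τ:ℂ) * Complex.I - 1) *
      ((1 - sigm u : ℝ) : ℂ) ^ ((n:ℂ) - ((((n:ℝ)/2 : ℝ):ℂ) + (τ:ℂ) * Complex.I) - 1) *
        (f (sigm u)))
    = Complex.exp (((τ * u : ℝ) : ℂ) * Complex.I) *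
      (((sigm u * (1 - sigm u)) ^ ((n:ℝ)/2) * f (sigm u) : ℝ) : ℂ) := by
  set p := sigm u with hp'
  have hp : 0 < p := sigm_pos u
  have hq : 0 < 1 - p := by have := sigm_lt_one u; rw [← hp'] at this; linarith
  have hpq : 0 < p * (1 - p) := by positivity
  have hlu : Real.log p - Real.log (1 - p) = u := by
    rw [← Real.log_div (ne_of_gt hp) (ne_of_gt hq), hp', sigm_div, Real.log_exp]
  have e1 : (p:ℂ) ^ ((((n:ℝ)/2 : ℝ):ℂ) + (τ:ℂ) * Complex.I - 1)
      = Complex.exp (((Real.log p : ℝ):ℂ) * ((((n:ℝ)/2 : ℝ):ℂ) + (τ:ℂ) * Complex.I - 1)) := by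
    rw [Complex.cpow_def_of_ne_zero (by exact_mod_cast hp.ne'), ← Complex.ofReal_log hp.le]
  have e2 : ((1 - p : ℝ):ℂ) ^ ((n:ℂ) - ((((n:ℝ)/2 : ℝ):ℂ) + (τ:ℂ) * Complex.I) - 1)
      = Complex.exp (((Real.log (1 - p) : ℝ):ℂ) *
          ((n:ℂ) - ((((n:ℝ)/2 : ℝ):ℂ) + (τ:ℂ) * Complex.I) - 1)) := by
    rw [Complex.cpow_def_of_ne_zero (by exact_mod_cast hq.ne'), ← Complex.ofReal_log hq.le]
  have hS : ((Real.log p : ℝ):ℂ) * ((((n:ℝ)/2 : ℝ):ℂ) + (τ:ℂ) * Complex.I - 1) +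
      ((Real.log (1 - p) : ℝ):ℂ) * ((n:ℂ) - ((((n:ℝ)/2 : ℝ):ℂ) + (τ:ℂ) * Complex.I) - 1)
      = (((((n:ℝ)/2 - 1) * Real.log (p * (1 - p))) : ℝ):ℂ) + ((τ * u : ℝ):ℂ) * Complex.I := by
    rw [Real.log_mul (ne_of_gt hp) (ne_of_gt hq), ← hlu]
    push_cast
    ring
  have e3 : Complex.exp ((((((n:ℝ)/2 - 1) * Real.log (p * (1 - p))) : ℝ) : ℂ))
      = (((p * (1 - p)) ^ ((n:ℝ)/2 - 1) : ℝ):ℂ) := by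
    rw [Real.rpow_def_of_pos hpq, mul_comm (Real.log (p * (1 - p))), Complex.ofReal_exp]
  have hrpow : (p * (1 - p)) ^ ((n:ℝ)/2) = (p * (1 - p)) * (p * (1 - p)) ^ ((n:ℝ)/2 - 1) := by
    have h5 := Real.rpow_add hpq 1 ((n:ℝ)/2 - 1)
    rw [Real.rpow_one] at h5
    rw [← h5]
    congr 1
    ring
  rw [e1, e2, abs_of_pos hpq, Complex.real_smul, ← Complex.exp_add, hS, Complex.exp_add,
    e3, hrpow]
  push_cast
  ring

lemma f_zero_on_Ioo {n : ℕ} (hn : 1 ≤ n) {f : ℝ → ℝ} (hf : ContinuousOn f (Set.Icc 0 1))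
    (h : ∀ x ∈ Set.Icc (0:ℝ) 1, betaOp n f x = 0) :
    ∀ t ∈ Set.Ioo (0:ℝ) 1, f t = 0 := by
  have hn0 : (0:ℝ) < n := Nat.cast_pos.mpr hn
  have hFz := Fz_zero_on_strip hn hf h
  set g : ℝ → ℂ := fun u => (((sigm u * (1 - sigm u)) ^ ((n:ℝ)/2) * f (sigm u) : ℝ) : ℂ) with hg
  have hσderiv : ∀ x ∈ (Set.univ : Set ℝ),
      HasDerivWithinAt sigm (sigm x * (1 - sigm x)) Set.univ x :=
    fun x _ => (sigm_hasDerivAt x).hasDerivWithinAt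
  have hIoo : Set.Ioo (0:ℝ) 1 = sigm '' Set.univ := by rw [Set.image_univ, sigm_range]
  have hzS : ∀ τ : ℝ, ((((n:ℝ)/2 : ℝ):ℂ) + (τ:ℂ) * Complex.I) ∈
      {z : ℂ | 0 < z.re ∧ z.re < (n:ℝ)} := by
    intro τ
    constructor <;>
      simp only [Set.mem_setOf_eq, Complex.add_re, Complex.ofReal_re, Complex.mul_re,
        Complex.I_re, Complex.ofReal_im, Complex.I_im, mul_zero, mul_one, zero_mul, sub_zero,
        zero_sub, mul_comm] <;>
      norm_num <;> linarith
  -- Fourier transform of g vanishes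
  have hF0 : 𝓕 g = 0 := by
    funext w
    show 𝓕 g w = 0
    set τ : ℝ := -(2 * Real.pi * w) with hτ
    set z : ℂ := (((n:ℝ)/2 : ℝ):ℂ) + (τ:ℂ) * Complex.I with hz
    have h0 := hFz z (hzS τ)
    rw [Fz, hIoo, integral_image_eq_integral_abs_deriv_smul MeasurableSet.univ hσderiv
      sigm_injective.injOn, Measure.restrict_univ] at h0
    rw [Real.fourier_real_eq_integral_exp_smul, ← h0]
    apply integral_congr_ae
    refine Eventually.of_forall fun u => ?_
    simp only []
    rw [smul_eq_mul,
      show ((-2 * Real.pi * u * w : ℝ):ℂ) = ((τ * u : ℝ):ℂ) by rw [hτ]; push_cast; ring]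
    exact (point_eq n f τ u).symm
  -- integrability of g
  have hgint : Integrable g := by
    have h1 := integrand_integrableOn hf (z := (((n:ℝ)/2 : ℝ):ℂ) + ((0:ℝ):ℂ) * Complex.I)
      (hzS 0).1 (hzS 0).2
    rw [hIoo] at h1
    have h2 := (integrableOn_image_iff_integrableOn_abs_deriv_smul MeasurableSet.univ hσderiv
      sigm_injective.injOn _).mp h1
    rw [integrableOn_univ] at h2
    apply h2.congr
    refine Eventually.of_forall fun u => ?_
    have := point_eq n f 0 u
    rw [zero_mul] at this
    simp only [hg]
    simpa using this
  -- continuity of g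
  have hσcont : Continuous sigm := by
    apply Real.continuous_exp.div (continuous_const.add Real.continuous_exp)
    intro x
    have := Real.exp_pos x
    show (1:ℝ) + Real.exp x ≠ 0
    positivity
  have hgcont : Continuous g := by
    rw [continuous_iff_continuousAt]
    intro u
    apply Complex.continuous_ofReal.continuousAt.comp
    apply ContinuousAt.mul
    · apply ContinuousAt.rpow_const
      · exact (hσcont.mul (continuous_const.sub hσcont)).continuousAt
      · left
        have h1 := sigm_pos u
        have h2 := sigm_lt_one u
        have : (0:ℝ) < sigm u * (1 - sigm u) := by nlinarith
        exact ne_of_gt this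
    · exact (hf.continuousAt (Icc_mem_nhds (sigm_pos u) (sigm_lt_one u))).comp
        hσcont.continuousAt
  -- conclude g = 0
  have hg0 : ∀ u : ℝ, g u = 0 := by
    intro u
    have hinv := hgint.fourierInv_fourier_eq (v := u) (by rw [hF0]; exact integrable_zero _ _ _)
      hgcont.continuousAt
    rw [hF0] at hinv
    have hz0 : 𝓕⁻ (0 : ℝ → ℂ) u = 0 := by
      rw [Real.fourierInv_eq]
      simp
    rw [hz0] at hinv
    exact hinv.symm
  -- conclude f = 0 on Ioo
  intro t ht
  have : t ∈ sigm '' Set.univ := hIoo ▸ ht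
  obtain ⟨u, -, hu⟩ := this
  have hgu := hg0 u
  rw [hg] at hgu
  simp only [Complex.ofReal_eq_zero] at hgu
  have h1 := sigm_pos u
  have h2 := sigm_lt_one u
  have hpos : (0:ℝ) < (sigm u * (1 - sigm u)) ^ ((n:ℝ)/2) :=
    Real.rpow_pos_of_pos (by nlinarith) _
  have := mul_eq_zero.mp hgu
  rcases this with h' | h'
  · exact absurd h' (ne_of_gt hpos)
  · rw [← hu]; exact h'

/-- The Beta operator is injective on `C[0,1]`. -/
theorem betaOp_injective (n : ℕ) (hn : 1 ≤ n) (f : ℝ → ℝ)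
    (hf : ContinuousOn f (Set.Icc 0 1))
    (h : ∀ x ∈ Set.Icc (0:ℝ) 1, betaOp n f x = 0) :
    ∀ x ∈ Set.Icc (0:ℝ) 1, f x = 0 := by
  intro x hx
  rcases eq_or_ne x 0 with rfl | hx0
  · have := h 0 (by norm_num)
    rwa [betaOp, if_pos rfl] at this
  rcases eq_or_ne x 1 with rfl | hx1
  · have := h 1 (by norm_num)
    rwa [betaOp, if_neg (by norm_num), if_pos rfl] at this
  exact f_zero_on_Ioo hn hf h x
    ⟨lt_of_le_of_ne hx.1 (Ne.symm hx0), lt_of_le_of_ne hx.2 hx1⟩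
end BetaAux
end

section
/- For every integer n ≥ 1 and every integer k ≥ 0 there exists a monic real polynomial q of degree k such that 𝔅̄ₙq(x) = η_k^{(n)} q(x) for all x ∈ [0,1], where η_k^{(n)} = (n−1)!·n^k/(n+k−1)!. Thus the numbers η_k^{(n)}, 0 ≤ k ≤ n, are eigenvalues of the Beta operator acting on polynomials of degree at most n. -/
open MeasureTheory Finset Polynomial

noncomputable def realBeta (u v : ℝ) : ℝ :=
  ∫ t in (0:ℝ)..1, t ^ (u - 1) * (1 - t) ^ (v - 1)

lemma cpow_ofReal_aux {t u : ℝ} (h0 : 0 ≤ t) : (t:ℂ) ^ ((u:ℂ) - 1) = ((t ^ (u-1) : ℝ) : ℂ) := by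
  rw [show ((u:ℂ) - 1) = ((u - 1 : ℝ) : ℂ) by push_cast; ring, ← Complex.ofReal_cpow h0]

lemma integrand_aux {t u v : ℝ} (h0 : 0 ≤ t) (h1 : t ≤ 1) :
    (t:ℂ) ^ ((u:ℂ) - 1) * (1 - (t:ℂ)) ^ ((v:ℂ) - 1)
      = ((t ^ (u-1) * (1 - t) ^ (v-1) : ℝ) : ℂ) := by
  rw [cpow_ofReal_aux h0, show (1 - (t:ℂ)) = ((1 - t : ℝ) : ℂ) by push_cast; ring,
    cpow_ofReal_aux (by linarith), ← Complex.ofReal_mul]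

lemma realBeta_intervalIntegrable {u v : ℝ} (hu : 0 < u) (hv : 0 < v) :
    IntervalIntegrable (fun t : ℝ => t ^ (u - 1) * (1 - t) ^ (v - 1)) volume 0 1 := by
  have hc := Complex.betaIntegral_convergent (u := u) (v := v) (by simpa) (by simpa)
  have h1 : IntegrableOn (fun t : ℝ => ((t:ℂ) ^ ((u:ℂ) - 1) * (1 - (t:ℂ)) ^ ((v:ℂ) - 1)).re)
      (Set.Ioc (0:ℝ) 1) volume := (hc.1).re
  constructor
  · refine h1.congr_fun (fun t ht => ?_) measurableSet_Ioc
    dsimp only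
    rw [integrand_aux ht.1.le ht.2, Complex.ofReal_re]
  · simp [IntegrableOn]

lemma realBeta_eq_Gamma {u v : ℝ} (hu : 0 < u) (hv : 0 < v) :
    realBeta u v = Real.Gamma u * Real.Gamma v / Real.Gamma (u + v) := by
  have key : (realBeta u v : ℂ) = Complex.betaIntegral u v := by
    rw [realBeta, Complex.betaIntegral, ← intervalIntegral.integral_ofReal]
    refine intervalIntegral.integral_congr (fun t ht => ?_)
    rw [Set.uIcc_of_le (by norm_num)] at ht
    exact (integrand_aux ht.1 ht.2).symm
  have hG := Complex.Gamma_mul_Gamma_eq_betaIntegral (s := u) (t := v) (by simpa) (by simpa)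
  rw [← key] at hG
  have hGuv : Real.Gamma (u + v) ≠ 0 := (Real.Gamma_pos_of_pos (by linarith)).ne'
  have hr : Real.Gamma u * Real.Gamma v = Real.Gamma (u + v) * realBeta u v := by
    have : ((Real.Gamma u * Real.Gamma v : ℝ) : ℂ)
        = ((Real.Gamma (u+v) * realBeta u v : ℝ) : ℂ) := by
      push_cast
      rw [← Complex.Gamma_ofReal, ← Complex.Gamma_ofReal, ← Complex.Gamma_ofReal]
      push_cast
      exact hG
    exact_mod_cast this
  field_simp
  linarith [hr]

lemma realBeta_pos {u v : ℝ} (hu : 0 < u) (hv : 0 < v) : 0 < realBeta u v := by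
  rw [realBeta_eq_Gamma hu hv]
  exact div_pos (mul_pos (Real.Gamma_pos_of_pos hu) (Real.Gamma_pos_of_pos hv))
    (Real.Gamma_pos_of_pos (by linarith))

lemma Gamma_add_nat {x : ℝ} (hx : 0 < x) (j : ℕ) :
    Real.Gamma (x + j) = (∏ i ∈ range j, (x + i)) * Real.Gamma x := by
  induction j with
  | zero => simp
  | succ j ih =>
    have : x + (j+1 : ℕ) = (x + j) + 1 := by push_cast; ring
    rw [this, Real.Gamma_add_one (by positivity), ih, prod_range_succ]
    push_cast; ring

lemma weight_pow_eqOn {a b : ℝ} (ha : 0 < a) (j : ℕ) {t : ℝ} (h0 : 0 ≤ t) :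
    t ^ (a - 1) * (1 - t) ^ (b - 1) * t ^ j = t ^ (a + j - 1) * (1 - t) ^ (b - 1) := by
  rcases eq_or_lt_of_le h0 with h | h
  · subst h
    rcases Nat.eq_zero_or_pos j with hj | hj
    · simp [hj]
    · have hpos : (0:ℝ) < a + j - 1 := by
        have : (1:ℝ) ≤ j := by exact_mod_cast hj
        linarith
      
      rw [zero_pow hj.ne', Real.zero_rpow hpos.ne', mul_zero, zero_mul]
  · rw [mul_right_comm, ← Real.rpow_natCast t j, ← Real.rpow_add h, add_sub_right_comm]

lemma integral_weight_pow {a b : ℝ} (ha : 0 < a) (hb : 0 < b) (j : ℕ) :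
    ∫ t in (0:ℝ)..1, t ^ (a - 1) * (1 - t) ^ (b - 1) * t ^ j = realBeta (a + j) b := by
  rw [realBeta]
  refine intervalIntegral.integral_congr (g := fun t => t ^ (a + j - 1) * (1 - t) ^ (b - 1))
    (fun t ht => ?_)
  rw [Set.uIcc_of_le (by norm_num)] at ht
  exact weight_pow_eqOn ha j ht.1

lemma weight_pow_intervalIntegrable {a b : ℝ} (ha : 0 < a) (hb : 0 < b) (j : ℕ) :
    IntervalIntegrable (fun t : ℝ => t ^ (a - 1) * (1 - t) ^ (b - 1) * t ^ j) volume 0 1 := by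
  refine (realBeta_intervalIntegrable (u := a + j) (v := b) (by positivity) hb).congr ?_
  rw [Set.uIoc_of_le (by norm_num : (0:ℝ) ≤ 1)]
  intro t ht
  exact (weight_pow_eqOn ha j ht.1.le).symm

lemma realBeta_ratio {a b : ℝ} (ha : 0 < a) (hb : 0 < b) (j : ℕ) :
    realBeta (a + j) b
      = ((∏ i ∈ range j, (a + i)) / ∏ i ∈ range j, (a + b + i)) * realBeta a b := by
  have hprod : (0:ℝ) < ∏ i ∈ range j, (a + b + i) :=
    prod_pos fun i _ => by positivity
  rw [realBeta_eq_Gamma (by positivity) hb, realBeta_eq_Gamma ha hb,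
    show a + (j:ℝ) + b = (a + b) + j by ring, Gamma_add_nat ha, Gamma_add_nat
    (show (0:ℝ) < a + b by positivity)]
  have h1 : Real.Gamma (a+b) ≠ 0 := (Real.Gamma_pos_of_pos (by positivity)).ne'
  field_simp

variable (n : ℕ)

noncomputable def betaNum (j : ℕ) : Polynomial ℝ :=
  ∏ i ∈ range j, (C (n:ℝ) * X + C (i:ℝ))

noncomputable def betaDen (j : ℕ) : ℝ := ∏ i ∈ range j, ((n:ℝ) + i)

noncomputable def betaPoly (j : ℕ) : Polynomial ℝ := (betaDen n j)⁻¹ • betaNum n j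

noncomputable def etaBeta (j : ℕ) : ℝ := (n:ℝ) ^ j / betaDen n j

variable {n}

lemma betaDen_pos (hn : 1 ≤ n) (j : ℕ) : 0 < betaDen n j := by
  refine prod_pos fun i _ => ?_
  have : (1:ℝ) ≤ n := by exact_mod_cast hn
  positivity

lemma etaBeta_pos (hn : 1 ≤ n) (j : ℕ) : 0 < etaBeta n j := by
  have : (1:ℝ) ≤ n := by exact_mod_cast hn
  exact div_pos (by positivity) (betaDen_pos hn j)

lemma betaDen_succ (j : ℕ) : betaDen n (j+1) = betaDen n j * ((n:ℝ) + j) :=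
  prod_range_succ _ _

lemma etaBeta_succ (hn : 1 ≤ n) (j : ℕ) :
    etaBeta n (j+1) = etaBeta n j * ((n:ℝ) / ((n:ℝ) + j)) := by
  have h1 : (0:ℝ) < betaDen n j := betaDen_pos hn j
  have h2 : (0:ℝ) < (n:ℝ) + j := by
    have : (1:ℝ) ≤ n := by exact_mod_cast hn
    positivity
  rw [etaBeta, etaBeta, betaDen_succ, pow_succ]
  field_simp

lemma etaBeta_zero : etaBeta n 0 = 1 := by simp [etaBeta, betaDen]

lemma etaBeta_one (hn : 1 ≤ n) : etaBeta n 1 = 1 := by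
  have : (n:ℝ) ≠ 0 := by positivity
  simp [etaBeta, betaDen, this]

lemma etaBeta_strict_anti (hn : 1 ≤ n) {j k : ℕ} (h1 : 1 ≤ j) (hjk : j < k) :
    etaBeta n k < etaBeta n j := by
  induction k with
  | zero => omega
  | succ k ih =>
    have hn' : (1:ℝ) ≤ n := by exact_mod_cast hn
    have hfrac : (n:ℝ) / ((n:ℝ) + k) < 1 := by
      rw [div_lt_one (by positivity)]
      have : (0:ℝ) < k := by
        have : 0 < k := by omega
        exact_mod_cast this
      linarith
    rcases Nat.lt_or_ge j k with h | h
    · calc etaBeta n (k+1) = etaBeta n k * ((n:ℝ)/((n:ℝ)+k)) := etaBeta_succ hn k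
        _ < etaBeta n k * 1 := mul_lt_mul_of_pos_left hfrac (etaBeta_pos hn k)
        _ = etaBeta n k := mul_one _
        _ < etaBeta n j := ih h
    · have hjeq : j = k := by omega
      subst hjeq
      calc etaBeta n (j+1) = etaBeta n j * ((n:ℝ)/((n:ℝ)+j)) := etaBeta_succ hn j
        _ < etaBeta n j * 1 := mul_lt_mul_of_pos_left hfrac (etaBeta_pos hn j)
        _ = etaBeta n j := mul_one _

lemma etaBeta_lt_one (hn : 1 ≤ n) {j : ℕ} (hj : 2 ≤ j) : etaBeta n j < 1 := by
  have := etaBeta_strict_anti hn (le_refl 1) (by omega : 1 < j)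
  rwa [etaBeta_one hn] at this

lemma etaBeta_ne (hn : 1 ≤ n) {j k : ℕ} (hk : 2 ≤ k) (hjk : j < k) :
    etaBeta n k ≠ etaBeta n j := by
  rcases Nat.eq_zero_or_pos j with h | h
  · subst h
    rw [etaBeta_zero]
    exact (etaBeta_lt_one hn hk).ne
  · exact (etaBeta_strict_anti hn h hjk).ne

lemma betaNum_factor_ne (hn : 1 ≤ n) (i : ℕ) : (C (n:ℝ) * X + C (i:ℝ)) ≠ 0 := by
  have hne : ((n:ℝ)) ≠ 0 := by positivity
  intro h
  exact hne (by simpa using congrArg (fun p => coeff p 1) h)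

lemma betaNum_natDegree (hn : 1 ≤ n) (j : ℕ) : (betaNum n j).natDegree = j := by
  have hne : ((n:ℝ)) ≠ 0 := by positivity
  rw [betaNum, natDegree_prod _ _ (fun i _ => betaNum_factor_ne hn i),
    Finset.sum_congr rfl fun i _ => natDegree_linear hne]
  simp

lemma betaNum_leadingCoeff (hn : 1 ≤ n) (j : ℕ) :
    (betaNum n j).leadingCoeff = (n:ℝ) ^ j := by
  have hne : ((n:ℝ)) ≠ 0 := by positivity
  rw [betaNum, leadingCoeff_prod, Finset.prod_congr rfl fun i _ => leadingCoeff_linear hne]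
  simp

lemma betaNum_natDegree_le (j : ℕ) : (betaNum n j).natDegree ≤ j := by
  rw [betaNum]
  refine (natDegree_prod_le (range j) (fun i => C (n:ℝ) * X + C (i:ℝ))).trans ?_
  refine le_trans (Finset.sum_le_sum (g := fun _ => 1) fun i _ => natDegree_linear_le) ?_
  simp

lemma betaPoly_natDegree_le (j : ℕ) : (betaPoly n j).natDegree ≤ j :=
  (natDegree_smul_le _ _).trans (betaNum_natDegree_le j)

lemma betaPoly_coeff_self (hn : 1 ≤ n) (j : ℕ) : (betaPoly n j).coeff j = etaBeta n j := by
  rw [betaPoly, coeff_smul, smul_eq_mul]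
  have h2 := betaNum_leadingCoeff hn j
  rw [leadingCoeff, betaNum_natDegree hn j] at h2
  rw [h2, etaBeta, div_eq_inv_mul]

lemma betaPoly_coeff_eq_zero {j m : ℕ} (h : j < m) : (betaPoly n j).coeff m = 0 :=
  coeff_eq_zero_of_natDegree_lt (lt_of_le_of_lt (betaPoly_natDegree_le j) h)

lemma betaPoly_zero : betaPoly n 0 = 1 := by simp [betaPoly, betaNum, betaDen]

lemma betaPoly_one (hn : 1 ≤ n) : betaPoly n 1 = X := by
  have hne : ((n:ℝ)) ≠ 0 := by positivity
  rw [betaPoly, betaNum, betaDen]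
  simp only [range_one, prod_singleton, Nat.cast_zero, map_zero, add_zero, smul_eq_C_mul,
    Nat.cast_zero]
  rw [← mul_assoc, ← C_mul, inv_mul_cancel₀ hne, C_1, one_mul]

noncomputable def betaT (n : ℕ) : Polynomial ℝ →ₗ[ℝ] Polynomial ℝ where
  toFun q := q.sum fun j a => a • betaPoly n j
  map_add' p q := Polynomial.sum_add_index p q _ (fun i => zero_smul ℝ _)
    (fun a b₁ b₂ => add_smul _ _ _)
  map_smul' c p := by
    show (c • p).sum (fun j a => a • betaPoly n j) = c • p.sum fun j a => a • betaPoly n j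
    rw [Polynomial.sum_smul_index p c (fun j a => a • betaPoly n j) (fun i => zero_smul ℝ _),
      Polynomial.smul_sum]
    simp only [mul_smul]

lemma betaT_sum_range (q : Polynomial ℝ) :
    betaT n q = ∑ j ∈ range (q.natDegree + 1), q.coeff j • betaPoly n j :=
  Polynomial.sum_over_range' q (f := fun j a => a • betaPoly n j)
    (fun _ => zero_smul ℝ _) _ (Nat.lt_succ_self _)

lemma betaT_natDegree_le (q : Polynomial ℝ) : (betaT n q).natDegree ≤ q.natDegree := by
  rw [betaT_sum_range]
  refine natDegree_sum_le_of_forall_le _ _ fun j hj => ?_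
  refine (natDegree_smul_le _ _).trans ((betaPoly_natDegree_le j).trans ?_)
  exact Nat.lt_succ_iff.mp (mem_range.mp hj)

lemma betaT_coeff (hn : 1 ≤ n) {q : Polynomial ℝ} {m : ℕ} (h : q.natDegree ≤ m) :
    (betaT n q).coeff m = etaBeta n m * q.coeff m := by
  rw [betaT_sum_range, finset_sum_coeff, Finset.sum_eq_single m]
  · rw [coeff_smul, betaPoly_coeff_self hn, smul_eq_mul, mul_comm]
  · intro j hj hjm
    have : j < m := lt_of_le_of_ne (le_trans (Nat.lt_succ_iff.mp (mem_range.mp hj)) h) hjm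
    rw [coeff_smul, betaPoly_coeff_eq_zero this, smul_zero]
  · intro hm
    have hqm : q.coeff m = 0 := by
      refine coeff_eq_zero_of_natDegree_lt ?_
      rw [mem_range] at hm
      omega
    rw [coeff_smul, hqm, zero_smul]

noncomputable def betaF (n : ℕ) (j : ℕ) : Module.End ℝ (Polynomial ℝ) :=
  (betaT n : Module.End ℝ (Polynomial ℝ)) - etaBeta n j • 1

lemma betaF_apply (j : ℕ) (p : Polynomial ℝ) :
    betaF n j p = betaT n p - etaBeta n j • p := by
  simp [betaF]

lemma betaT_C (c : ℝ) : betaT n (C c) = C c := by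
  show (C c).sum (fun j a => a • betaPoly n j) = C c
  rw [Polynomial.sum_C_index (by simp)]
  rw [betaPoly_zero, smul_eq_C_mul, mul_one]

lemma betaT_X (hn : 1 ≤ n) : betaT n X = X := by
  show (X : Polynomial ℝ).sum (fun j a => a • betaPoly n j) = X
  rw [Polynomial.sum_X_index (by simp), one_smul, betaPoly_one hn]

lemma betaF_comm (i j : ℕ) : Commute (betaF n i) (betaF n j) := by
  have hT : Commute (betaT n : Module.End ℝ (Polynomial ℝ)) (betaT n) := Commute.refl _
  have h1 : Commute (betaT n : Module.End ℝ (Polynomial ℝ)) (etaBeta n j • 1) :=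
    (Commute.one_right _).smul_right _
  have h2 : Commute (etaBeta n i • (1 : Module.End ℝ (Polynomial ℝ))) (betaT n) :=
    (Commute.one_left _).smul_left _
  have h3 : Commute (etaBeta n i • (1 : Module.End ℝ (Polynomial ℝ))) (etaBeta n j • 1) :=
    (((Commute.refl 1).smul_left _).smul_right _)
  exact (hT.sub_right h1).sub_left (h2.sub_right h3)

noncomputable def betaProd (n : ℕ) : ℕ → Module.End ℝ (Polynomial ℝ)
  | 0 => 1
  | k+1 => betaProd n k * betaF n k

lemma betaProd_comm (m j : ℕ) : betaProd n m * betaF n j = betaF n j * betaProd n m := by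
  induction m with
  | zero => rw [betaProd, one_mul, mul_one]
  | succ m ih =>
    rw [betaProd, mul_assoc, (betaF_comm m j).eq, ← mul_assoc, ih, mul_assoc]

lemma betaProd_succ' (k : ℕ) : betaProd n (k+1) = betaF n k * betaProd n k := by
  rw [betaProd, betaProd_comm]

lemma annihilate (hn : 1 ≤ n) :
    ∀ k, ∀ p : Polynomial ℝ, p.natDegree ≤ k → (betaProd n (k+1)) p = 0 := by
  intro k
  induction k with
  | zero =>
    intro p hp
    rw [betaProd, betaProd, one_mul, betaF_apply, etaBeta_zero, one_smul,
      Polynomial.eq_C_of_natDegree_le_zero hp, betaT_C, sub_self]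
  | succ k ih =>
    intro p hp
    rw [betaProd, Module.End.mul_apply]
    refine ih _ ?_
    rw [betaF_apply]
    refine natDegree_le_iff_coeff_eq_zero.mpr fun m hm => ?_
    rw [coeff_sub, coeff_smul, smul_eq_mul]
    rcases Nat.lt_or_ge (k+1) m with h | h
    · have hz : p.coeff m = 0 := coeff_eq_zero_of_natDegree_lt (by omega)
      have : (betaT n p).coeff m = 0 :=
        coeff_eq_zero_of_natDegree_lt (lt_of_le_of_lt (betaT_natDegree_le p) (by omega))
      rw [this, hz, mul_zero, sub_zero]
    · have hm1 : m = k + 1 := by omega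
      subst hm1
      rw [betaT_coeff hn hp, sub_self]

noncomputable def qcand (n k : ℕ) : Polynomial ℝ :=
  (betaProd n k) (X ^ k : Polynomial ℝ)

lemma qcand_spec (hn : 1 ≤ n) (k : ℕ) :
    ∀ m, m ≤ k → ((betaProd n m) (X ^ k : Polynomial ℝ)).natDegree ≤ k ∧
      ((betaProd n m) (X ^ k : Polynomial ℝ)).coeff k
        = ∏ j ∈ range m, (etaBeta n k - etaBeta n j) := by
  intro m
  induction m with
  | zero =>
    intro _
    constructor
    · rw [betaProd, Module.End.one_apply]
      exact natDegree_X_pow_le k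
    · rw [betaProd, Module.End.one_apply, coeff_X_pow, if_pos rfl, range_zero, prod_empty]
  | succ m ih =>
    intro hm
    obtain ⟨h1, h2⟩ := ih (by omega)
    rw [betaProd_succ', Module.End.mul_apply, betaF_apply]
    constructor
    · refine (natDegree_sub_le _ _).trans (max_le ((betaT_natDegree_le _).trans h1) ?_)
      exact (natDegree_smul_le _ _).trans h1
    · rw [coeff_sub, coeff_smul, smul_eq_mul, betaT_coeff hn h1, h2, prod_range_succ]
      ring

lemma betaT_qcand (hn : 1 ≤ n) (k : ℕ) :
    betaT n (qcand n k) = etaBeta n k • qcand n k := by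
  have h0 : (betaF n k) (qcand n k) = 0 := by
    rw [qcand, ← Module.End.mul_apply, ← betaProd_succ']
    exact annihilate hn k _ (natDegree_X_pow_le k)
  rw [betaF_apply] at h0
  linear_combination (norm := module) h0

theorem eigenpoly (hn : 1 ≤ n) (k : ℕ) :
    ∃ q : Polynomial ℝ, q.Monic ∧ q.natDegree = k ∧ betaT n q = etaBeta n k • q := by
  match k with
  | 0 => exact ⟨1, monic_one, natDegree_one, by rw [etaBeta_zero, one_smul]; exact betaT_C 1⟩
  | 1 => exact ⟨X, monic_X, natDegree_X, by rw [etaBeta_one hn, one_smul]; exact betaT_X hn⟩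
  | (m+2) =>
    set k := m + 2 with hk
    have hk2 : 2 ≤ k := by omega
    set c : ℝ := ∏ j ∈ range k, (etaBeta n k - etaBeta n j) with hc
    have hcne : c ≠ 0 := by
      refine prod_ne_zero_iff.mpr fun j hj => ?_
      exact sub_ne_zero_of_ne (etaBeta_ne hn hk2 (mem_range.mp hj))
    obtain ⟨h1, h2⟩ := qcand_spec hn k k (le_refl k)
    have hcoeff : (c⁻¹ • qcand n k).coeff k = 1 := by
      rw [coeff_smul, qcand, h2, ← hc, smul_eq_mul, inv_mul_cancel₀ hcne]
    have hdeg : (c⁻¹ • qcand n k).natDegree = k := by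
      refine le_antisymm ((natDegree_smul_le _ _).trans h1) ?_
      exact le_natDegree_of_ne_zero (by rw [hcoeff]; exact one_ne_zero)
    refine ⟨c⁻¹ • qcand n k, ?_, hdeg, ?_⟩
    · rw [Monic, leadingCoeff, hdeg, hcoeff]
    · rw [_root_.map_smul, betaT_qcand hn, smul_comm]

lemma betaT_eval (q : Polynomial ℝ) (x : ℝ) :
    (betaT n q).eval x = ∑ j ∈ range (q.natDegree + 1),
      q.coeff j * ((betaDen n j)⁻¹ * ∏ i ∈ range j, ((n:ℝ) * x + i)) := by
  rw [betaT_sum_range]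
  rw [eval_finset_sum _ _ x]
  refine Finset.sum_congr rfl fun j _ => ?_
  rw [eval_smul, smul_eq_mul, betaPoly, eval_smul, smul_eq_mul, betaNum, eval_prod]
  simp

lemma betaT_eval_zero (q : Polynomial ℝ) : (betaT n q).eval 0 = q.eval 0 := by
  rw [betaT_eval, Finset.sum_eq_single 0]
  · simp [betaDen, coeff_zero_eq_eval_zero]
  · intro j hj hj0
    have : (∏ i ∈ range j, ((n:ℝ) * 0 + i)) = 0 := by
      refine Finset.prod_eq_zero (Finset.mem_range.mpr (Nat.pos_of_ne_zero hj0)) ?_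
      norm_num
    rw [this, mul_zero, mul_zero]
  · intro h
    exact absurd (Finset.mem_range.mpr (Nat.succ_pos _)) h

lemma betaT_eval_one (hn : 1 ≤ n) (q : Polynomial ℝ) : (betaT n q).eval 1 = q.eval 1 := by
  rw [betaT_eval]
  have : ∀ j, (∏ i ∈ range j, ((n:ℝ) * 1 + i)) = betaDen n j := by
    intro j
    exact Finset.prod_congr rfl fun i _ => by rw [mul_one]
  conv_rhs => rw [eval_eq_sum_range]
  refine Finset.sum_congr rfl fun j _ => ?_
  rw [this, inv_mul_cancel₀ (betaDen_pos hn j).ne', mul_one, one_pow, mul_one]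

lemma etaBeta_eq_factorial (hn : 1 ≤ n) (k : ℕ) :
    ((n-1).factorial : ℝ) * (n:ℝ) ^ k / ((n+k-1).factorial : ℝ) = etaBeta n k := by
  have key : (n + k - 1).factorial = (n-1).factorial * ∏ i ∈ range k, (n + i) := by
    induction k with
    | zero => simp
    | succ k ih =>
      have h1 : n + (k+1) - 1 = (n + k - 1) + 1 := by omega
      have h2 : n + k - 1 + 1 = n + k := by omega
      rw [h1, Nat.factorial_succ, ih, prod_range_succ, h2]
      ring
  have hfact : ((n-1).factorial : ℝ) ≠ 0 := by positivity
  rw [etaBeta, betaDen, key]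
  push_cast
  rw [mul_div_mul_left _ _ hfact]

/-- For every `n ≥ 1` and `k ≥ 0` there is a monic eigenpolynomial of degree `k`
of the Beta operator with eigenvalue `η_k^{(n)} = (n-1)!·n^k/(n+k-1)!`. -/
theorem betaOp_eigenpolynomial (n : ℕ) (hn : 1 ≤ n) (k : ℕ) :
    ∃ q : Polynomial ℝ, q.Monic ∧ q.natDegree = k ∧
      ∀ x ∈ Set.Icc (0:ℝ) 1,
        betaOp n (fun t => q.eval t) x =
          ((Nat.factorial (n - 1) : ℝ) * (n : ℝ) ^ k / (Nat.factorial (n + k - 1) : ℝ))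
            * q.eval x := by
  obtain ⟨q, hmon, hdeg, heig⟩ := eigenpoly hn k
  refine ⟨q, hmon, hdeg, fun x hx => ?_⟩
  rw [etaBeta_eq_factorial hn k]
  have hevalT : ∀ y : ℝ, (betaT n q).eval y = etaBeta n k * q.eval y := by
    intro y
    rw [heig, eval_smul, smul_eq_mul]
  by_cases hx0 : x = 0
  · subst hx0
    simp only [betaOp, if_true, eq_self_iff_true]
    rw [← hevalT 0, betaT_eval_zero]
  by_cases hx1 : x = 1
  · subst hx1
    simp only [betaOp, if_neg one_ne_zero, if_true, eq_self_iff_true]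
    rw [← hevalT 1, betaT_eval_one hn]
  obtain ⟨hxl, hxr⟩ := hx
  have hxpos : 0 < x := lt_of_le_of_ne hxl (Ne.symm hx0)
  have hxlt : x < 1 := lt_of_le_of_ne hxr hx1
  have hn' : (1:ℝ) ≤ n := by exact_mod_cast hn
  have ha : 0 < (n:ℝ) * x := by positivity
  have hb : 0 < (n:ℝ) * (1 - x) := mul_pos (by positivity) (by linarith)
  simp only [betaOp, if_neg hx0, if_neg hx1]
  set N := q.natDegree + 1 with hN
  have hnum : (∫ t in (0:ℝ)..1,
        t ^ ((n:ℝ) * x - 1) * (1 - t) ^ ((n:ℝ) * (1 - x) - 1) * q.eval t)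
      = ∑ j ∈ range N, q.coeff j * realBeta ((n:ℝ) * x + j) ((n:ℝ) * (1 - x)) := by
    have step1 : (fun t : ℝ => t ^ ((n:ℝ) * x - 1) * (1 - t) ^ ((n:ℝ) * (1 - x) - 1) * q.eval t)
        = fun t : ℝ => ∑ j ∈ range N,
            q.coeff j * (t ^ ((n:ℝ) * x - 1) * (1 - t) ^ ((n:ℝ) * (1 - x) - 1) * t ^ j) := by
      funext t
      rw [eval_eq_sum_range, mul_sum, hN]
      exact Finset.sum_congr rfl fun j _ => by ring
    calc (∫ t in (0:ℝ)..1,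
          t ^ ((n:ℝ) * x - 1) * (1 - t) ^ ((n:ℝ) * (1 - x) - 1) * q.eval t)
        = ∑ j ∈ range N, ∫ t in (0:ℝ)..1,
            q.coeff j * (t ^ ((n:ℝ) * x - 1) * (1 - t) ^ ((n:ℝ) * (1 - x) - 1) * t ^ j) := by
          rw [step1]
          exact intervalIntegral.integral_finset_sum
            (fun j _ => (weight_pow_intervalIntegrable ha hb j).const_mul _)
      _ = ∑ j ∈ range N, q.coeff j * realBeta ((n:ℝ) * x + j) ((n:ℝ) * (1 - x)) := by
          refine Finset.sum_congr rfl fun j _ => ?_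
          rw [intervalIntegral.integral_const_mul, integral_weight_pow ha hb j]
  have hden : (∫ t in (0:ℝ)..1, t ^ ((n:ℝ) * x - 1) * (1 - t) ^ ((n:ℝ) * (1 - x) - 1))
      = realBeta ((n:ℝ) * x) ((n:ℝ) * (1 - x)) := rfl
  have hBpos := realBeta_pos ha hb
  rw [hnum, hden, ← hevalT x, betaT_eval, Finset.sum_div]
  refine Finset.sum_congr rfl fun j _ => ?_
  rw [realBeta_ratio ha hb j]
  have hprod : (∏ i ∈ range j, ((n:ℝ) * x + (n:ℝ) * (1 - x) + i)) = betaDen n j := by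
    refine Finset.prod_congr rfl fun i _ => ?_
    ring_nf
  rw [hprod]
  have hD := (betaDen_pos hn j).ne'
  field_simp
end

section
/- Fix k ≥ 2 and for each n ≥ 1 let q^{(n)} be a monic real polynomial of degree k satisfying 𝔅̄ₙ q^{(n)}(x) = η_k^{(n)} q^{(n)}(x) for all x ∈ [0,1], where η_k^{(n)} = (n−1)!·n^k/(n+k−1)!. Then for each j with 0 ≤ j ≤ k, the coefficient of x^j in q^{(n)} converges as n → ∞ to a*(k,j) = ∏_{l=1}^{k−j} ((k+1−l)(k−l)) / (l(l−2k+1)) (empty product equal to 1 for j = k). -/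
open MeasureTheory Finset Polynomial Filter

open MeasureTheory Finset Polynomial Filter

noncomputable def rB (a b : ℝ) : ℝ := ∫ t in (0:ℝ)..1, t ^ (a-1) * (1-t) ^ (b-1)

lemma ae_Ioo : ∀ᵐ (t : ℝ) ∂(volume : Measure ℝ), t ∈ Set.uIoc (0:ℝ) 1 → t ∈ Set.Ioo (0:ℝ) 1 := by
  have h1 : ∀ᵐ (t : ℝ) ∂(volume : Measure ℝ), t ≠ 1 := by
    refine ae_iff.2 ?_
    simp only [ne_eq, not_not]
    exact measure_mono_null (fun x hx => hx) (Real.volume_singleton (a := 1))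
  filter_upwards [h1] with t ht hmem
  rw [Set.uIoc_of_le zero_le_one] at hmem
  exact ⟨hmem.1, lt_of_le_of_ne hmem.2 ht⟩

lemma ofReal_rB {a b : ℝ} (ha : 0 < a) (hb : 0 < b) :
    Complex.betaIntegral a b = (rB a b : ℂ) := by
  rw [Complex.betaIntegral, rB, ← intervalIntegral.integral_ofReal]
  apply intervalIntegral.integral_congr_ae
  filter_upwards [ae_Ioo] with t ht hmem
  obtain ⟨h0, h1⟩ := ht hmem
  rw [Complex.ofReal_mul, Complex.ofReal_cpow h0.le, Complex.ofReal_cpow (by linarith)]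
  push_cast
  ring_nf

lemma rB_eq_Gamma {a b : ℝ} (ha : 0 < a) (hb : 0 < b) :
    rB a b = Real.Gamma a * Real.Gamma b / Real.Gamma (a + b) := by
  have h := Complex.Gamma_mul_Gamma_eq_betaIntegral
    (s := a) (t := b) (by simpa using ha) (by simpa using hb)
  rw [ofReal_rB ha hb, ← Complex.ofReal_add, Complex.Gamma_ofReal, Complex.Gamma_ofReal,
    Complex.Gamma_ofReal, ← Complex.ofReal_mul, ← Complex.ofReal_mul] at h
  have := Complex.ofReal_injective h
  have hG : Real.Gamma (a + b) ≠ 0 := (Real.Gamma_pos_of_pos (by linarith)).ne'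
  field_simp
  linarith [this]

lemma rB_pos {a b : ℝ} (ha : 0 < a) (hb : 0 < b) : 0 < rB a b := by
  rw [rB_eq_Gamma ha hb]
  exact div_pos (mul_pos (Real.Gamma_pos_of_pos ha) (Real.Gamma_pos_of_pos hb))
    (Real.Gamma_pos_of_pos (by linarith))

lemma rB_succ_left {a b : ℝ} (ha : 0 < a) (hb : 0 < b) :
    rB (a+1) b = (a / (a+b)) * rB a b := by
  rw [rB_eq_Gamma (by linarith) hb, rB_eq_Gamma ha hb,
    Real.Gamma_add_one ha.ne', show a + 1 + b = (a+b) + 1 by ring,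
    Real.Gamma_add_one (by positivity)]
  have h1 : Real.Gamma (a + b) ≠ 0 := (Real.Gamma_pos_of_pos (by linarith)).ne'
  have h2 : a + b ≠ 0 := by positivity
  field_simp

lemma rB_intervalIntegrable {a b : ℝ} (ha : 0 < a) (hb : 0 < b) :
    IntervalIntegrable (fun t : ℝ => t ^ (a-1) * (1-t) ^ (b-1)) volume 0 1 := by
  have h := Complex.betaIntegral_convergent (u := a) (v := b) (by simpa using ha) (by simpa using hb)
  have h2 := h.congr (g := fun t : ℝ => ((t ^ (a-1) * (1-t) ^ (b-1) : ℝ) : ℂ)) ?_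
  · rw [intervalIntegrable_iff] at h2 ⊢
    have := h2.re
    apply this.congr
    filter_upwards with t
    simp
  · intro t hmem
    rw [Set.uIoc_of_le zero_le_one] at hmem
    obtain ⟨h0, h1⟩ := hmem
    dsimp only
    rw [Complex.ofReal_mul, Complex.ofReal_cpow h0.le, Complex.ofReal_cpow (by linarith)]
    push_cast
    ring_nf

lemma moment_congr {a b : ℝ} (j : ℕ) :
    ∀ᵐ (t : ℝ) ∂(volume : Measure ℝ), t ∈ Set.uIoc (0:ℝ) 1 →
      t ^ (a-1) * (1-t) ^ (b-1) * t ^ j = t ^ (a + j - 1) * (1-t) ^ (b-1) := by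
  filter_upwards [ae_Ioo] with t ht hmem
  obtain ⟨h0, h1⟩ := ht hmem
  rw [show a + j - 1 = (a - 1) + (j:ℝ) by ring, Real.rpow_add h0, Real.rpow_natCast]
  ring

lemma moment_integrable {a b : ℝ} (ha : 0 < a) (hb : 0 < b) (j : ℕ) :
    IntervalIntegrable (fun t : ℝ => t ^ (a-1) * (1-t) ^ (b-1) * t ^ j) volume 0 1 := by
  apply (rB_intervalIntegrable (by positivity : (0:ℝ) < a + j) hb).congr
  intro t hmem
  rw [Set.uIoc_of_le zero_le_one] at hmem
  dsimp only
  rw [show a + j - 1 = (a - 1) + (j:ℝ) by ring, Real.rpow_add hmem.1, Real.rpow_natCast]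
  ring

lemma moment_eq {a b : ℝ} (ha : 0 < a) (hb : 0 < b) (j : ℕ) :
    ∫ t in (0:ℝ)..1, t ^ (a-1) * (1-t) ^ (b-1) * t ^ j = rB (a + j) b :=
  intervalIntegral.integral_congr_ae (moment_congr j)

lemma rB_add_nat {a b : ℝ} (ha : 0 < a) (hb : 0 < b) (j : ℕ) :
    rB (a + j) b = (∏ i ∈ range j, (a + i) / (a + b + i)) * rB a b := by
  induction j with
  | zero => simp
  | succ m ih =>
    rw [prod_range_succ, show a + (↑(m+1):ℝ) = (a + m) + 1 by push_cast; ring,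
      rB_succ_left (by positivity) hb, ih]
    push_cast
    ring

lemma poly_integral {a b : ℝ} (ha : 0 < a) (hb : 0 < b) (p : Polynomial ℝ) :
    ∫ t in (0:ℝ)..1, t ^ (a-1) * (1-t) ^ (b-1) * p.eval t =
      ∑ j ∈ range (p.natDegree + 1), p.coeff j * rB (a + j) b := by
  have : ∀ t : ℝ, t ^ (a-1) * (1-t) ^ (b-1) * p.eval t =
      ∑ j ∈ range (p.natDegree + 1), p.coeff j * (t ^ (a-1) * (1-t) ^ (b-1) * t ^ j) := by
    intro t
    rw [p.eval_eq_sum_range t, Finset.mul_sum]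
    congr 1; ext j; ring
  simp_rw [this]
  rw [intervalIntegral.integral_finset_sum (fun j _ =>
    ((moment_integrable ha hb j).const_mul _))]
  congr 1; ext j
  rw [intervalIntegral.integral_const_mul, moment_eq ha hb j]
noncomputable def Pn (n j : ℕ) : Polynomial ℝ :=
  ∏ i ∈ range j, (Polynomial.C ((n:ℝ)/((n:ℝ)+i)) * Polynomial.X + Polynomial.C ((i:ℝ)/((n:ℝ)+i)))

lemma Pn_eval (n j : ℕ) (x : ℝ) :
    (Pn n j).eval x = ∏ i ∈ range j, (((n:ℝ)*x + i) / ((n:ℝ) + i)) := by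
  rw [Pn, eval_prod]
  refine Finset.prod_congr rfl fun i _ => ?_
  simp only [eval_add, eval_mul, eval_C, eval_X]
  rw [div_mul_eq_mul_div, ← add_div]

lemma Pn_natDegree_le (n j : ℕ) : (Pn n j).natDegree ≤ j := by
  refine le_trans (Polynomial.natDegree_prod_le _ _) ?_
  calc ∑ i ∈ range j, (Polynomial.C ((n:ℝ)/((n:ℝ)+i)) * Polynomial.X
        + Polynomial.C ((i:ℝ)/((n:ℝ)+i))).natDegree
      ≤ ∑ i ∈ range j, 1 := by
        refine Finset.sum_le_sum fun i _ => ?_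
        refine le_trans (Polynomial.natDegree_add_le _ _) ?_
        simp only [Polynomial.natDegree_C, sup_le_iff]
        exact ⟨le_trans (Polynomial.natDegree_C_mul_le _ _) (by simp), Nat.zero_le 1⟩
    _ = j := by simp

lemma Pn_coeff_succ (n j m : ℕ) :
    (Pn n (j+1)).coeff (m+1) =
      ((n:ℝ)/((n:ℝ)+j)) * (Pn n j).coeff m + ((j:ℝ)/((n:ℝ)+j)) * (Pn n j).coeff (m+1) := by
  rw [Pn, Finset.prod_range_succ, ← Pn]
  rw [mul_add, Polynomial.coeff_add, Polynomial.coeff_mul_C, ← mul_assoc,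
    Polynomial.coeff_mul_X, Polynomial.coeff_mul_C]
  ring

lemma Pn_coeff_zero_succ (n j : ℕ) :
    (Pn n (j+1)).coeff 0 = ((j:ℝ)/((n:ℝ)+j)) * (Pn n j).coeff 0 := by
  rw [Pn, Finset.prod_range_succ, ← Pn]
  rw [mul_add, Polynomial.coeff_add, Polynomial.coeff_mul_C, ← mul_assoc,
    Polynomial.coeff_mul_X_zero]
  ring

noncomputable def lam (n j : ℕ) : ℝ := ∏ i ∈ range j, (n:ℝ)/((n:ℝ)+i)

lemma Pn_coeff_self (n j : ℕ) : (Pn n j).coeff j = lam n j := by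
  induction j with
  | zero => simp [Pn, lam]
  | succ m ih =>
    rw [Pn_coeff_succ, ih, Polynomial.coeff_eq_zero_of_natDegree_lt
      (lt_of_le_of_lt (Pn_natDegree_le n m) (Nat.lt_succ_self m))]
    rw [lam, lam, Finset.prod_range_succ]
    ring

lemma Pn_coeff_of_lt (n : ℕ) {j m : ℕ} (h : j < m) : (Pn n j).coeff m = 0 :=
  Polynomial.coeff_eq_zero_of_natDegree_lt (lt_of_le_of_lt (Pn_natDegree_le n j) h)

lemma betaOp_poly {n : ℕ} (hn : 1 ≤ n) (p : Polynomial ℝ) {x : ℝ} (hx : x ∈ Set.Ioo (0:ℝ) 1) :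
    betaOp n (fun t => p.eval t) x
      = ∑ j ∈ range (p.natDegree+1), p.coeff j * ∏ i ∈ range j, (((n:ℝ)*x + i) / ((n:ℝ) + i)) := by
  have hnpos : (0:ℝ) < n := by exact_mod_cast hn
  have ha : 0 < (n:ℝ)*x := by nlinarith [hx.1]
  have hb : 0 < (n:ℝ)*(1-x) := by nlinarith [hx.2]
  rw [betaOp, if_neg hx.1.ne', if_neg hx.2.ne]
  have hden : (∫ t in (0:ℝ)..1, t ^ ((n:ℝ)*x-1) * (1-t) ^ ((n:ℝ)*(1-x)-1))
      = rB ((n:ℝ)*x) ((n:ℝ)*(1-x)) := rfl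
  rw [poly_integral ha hb, hden, Finset.sum_div]
  refine Finset.sum_congr rfl fun j _ => ?_
  rw [rB_add_nat ha hb j, show (n:ℝ)*x + (n:ℝ)*(1-x) = (n:ℝ) by ring]
  have hB := (rB_pos ha hb).ne'
  field_simp
lemma fact_prod {n : ℕ} (hn : 1 ≤ n) (k : ℕ) :
    (n-1).factorial * ∏ i ∈ range k, (n+i) = (n+k-1).factorial := by
  induction k with
  | zero => simp
  | succ m ih =>
    rw [Finset.prod_range_succ, ← mul_assoc, ih,
      show n + (m+1) - 1 = (n + m - 1) + 1 by omega, Nat.factorial_succ,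
      show n + m - 1 + 1 = n + m by omega]
    ring

lemma eta_eq {n : ℕ} (hn : 1 ≤ n) (k : ℕ) :
    ((n-1).factorial : ℝ) * (n:ℝ)^k / ((n+k-1).factorial : ℝ) = lam n k := by
  have h := fact_prod hn k
  have h2 : ((n+k-1).factorial : ℝ) = ((n-1).factorial : ℝ) * ∏ i ∈ range k, ((n:ℝ)+i) := by
    push_cast [← h]
    ring
  rw [lam, h2]
  have h3 : ∀ i ∈ range k, (n:ℝ) + i ≠ 0 := fun i _ => by positivity
  have h4 : (∏ i ∈ range k, ((n:ℝ)+i)) ≠ 0 := Finset.prod_ne_zero_iff.2 h3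
  have h5 : ((n-1).factorial : ℝ) ≠ 0 := by positivity
  rw [Finset.prod_div_distrib, Finset.prod_const, Finset.card_range]
  field_simp

lemma eigen_coeff {k : ℕ} {p : Polynomial ℝ} {n : ℕ} (hn : 1 ≤ n) {E : ℝ}
    (hdeg : p.natDegree = k)
    (heig : ∀ x ∈ Set.Icc (0:ℝ) 1, betaOp n (fun t => p.eval t) x = E * p.eval x)
    (m : ℕ) :
    ∑ j ∈ range (k+1), p.coeff j * (Pn n j).coeff m = E * p.coeff m := by
  set F := (∑ j ∈ range (k+1), Polynomial.C (p.coeff j) * Pn n j) - Polynomial.C E * p with hFdef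
  have hFroot : Set.Ioo (0:ℝ) 1 ⊆ {x | F.IsRoot x} := by
    intro x hx
    have h1 := heig x ⟨hx.1.le, hx.2.le⟩
    rw [betaOp_poly hn p hx, hdeg] at h1
    simp only [Set.mem_setOf_eq, Polynomial.IsRoot, hFdef, Polynomial.eval_sub,
      Polynomial.eval_finset_sum, Polynomial.eval_mul, Polynomial.eval_C, sub_eq_zero]
    simp_rw [Pn_eval]
    exact h1
  have hF : F = 0 := Polynomial.eq_zero_of_infinite_isRoot F
    (Set.Infinite.mono hFroot (Set.infinite_coe_iff.mp (Set.Ioo.infinite (by norm_num))))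
  have h2 := congrArg (fun pp => Polynomial.coeff pp m) hF
  simp only [hFdef, Polynomial.coeff_sub, Polynomial.finset_sum_coeff,
    Polynomial.coeff_C_mul, Polynomial.coeff_zero, sub_eq_zero] at h2
  exact h2

lemma eigen_rearranged {k : ℕ} {p : Polynomial ℝ} {n : ℕ} (hn : 1 ≤ n) {E : ℝ}
    (hdeg : p.natDegree = k)
    (heig : ∀ x ∈ Set.Icc (0:ℝ) 1, betaOp n (fun t => p.eval t) x = E * p.eval x)
    {m : ℕ} (hm : m ≤ k) :
    (E - lam n m) * p.coeff m = ∑ j ∈ Icc (m+1) k, p.coeff j * (Pn n j).coeff m := by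
  have h := eigen_coeff hn hdeg heig m
  have hsplit : ∑ j ∈ Ico 0 (m+1), p.coeff j * (Pn n j).coeff m
      + ∑ j ∈ Ico (m+1) (k+1), p.coeff j * (Pn n j).coeff m
      = ∑ j ∈ range (k+1), p.coeff j * (Pn n j).coeff m := by
    rw [Finset.range_eq_Ico]
    exact Finset.sum_Ico_consecutive _ (Nat.zero_le _) (by omega)
  have h1 : ∑ j ∈ Ico 0 (m+1), p.coeff j * (Pn n j).coeff m = p.coeff m * lam n m := by
    rw [show Ico 0 (m+1) = range (m+1) by rw [Finset.range_eq_Ico], Finset.sum_range_succ,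
      Pn_coeff_self]
    rw [Finset.sum_eq_zero fun j hj => by
      rw [Pn_coeff_of_lt n (Finset.mem_range.mp hj), mul_zero], zero_add]
  rw [← hsplit, h1, Finset.Ico_add_one_right_eq_Icc] at h
  linarith [h]
lemma tendsto_shift_atTop (c : ℕ) :
    Tendsto (fun n : ℕ => (n:ℝ) + c) atTop atTop :=
  tendsto_atTop_add_const_right _ _ tendsto_natCast_atTop_atTop

lemma tendsto_const_div_shift (a : ℝ) (c : ℕ) :
    Tendsto (fun n : ℕ => a / ((n:ℝ) + c)) atTop (nhds 0) :=
  Tendsto.div_atTop tendsto_const_nhds (tendsto_shift_atTop c)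

lemma tendsto_frac (c : ℕ) :
    Tendsto (fun n : ℕ => (n:ℝ) / ((n:ℝ) + c)) atTop (nhds 1) := by
  have h : Tendsto (fun n : ℕ => 1 - (c:ℝ) / ((n:ℝ) + c)) atTop (nhds 1) := by
    simpa using (tendsto_const_nhds (x := (1:ℝ)) (f := atTop)).sub (tendsto_const_div_shift c c)
  refine h.congr' ?_
  filter_upwards [eventually_ge_atTop 1] with n hn
  have hnc : (n:ℝ) + c ≠ 0 := by positivity
  field_simp
  ring

lemma lam_succ (n j : ℕ) : lam n (j+1) = lam n j * ((n:ℝ)/((n:ℝ)+j)) := by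
  rw [lam, lam, Finset.prod_range_succ]

lemma tendsto_lam (j : ℕ) : Tendsto (fun n : ℕ => lam n j) atTop (nhds 1) := by
  induction j with
  | zero => simpa [lam] using tendsto_const_nhds
  | succ m ih =>
    have := ih.mul (tendsto_frac m)
    simp only [mul_one] at this
    refine this.congr fun n => (lam_succ n m).symm

lemma tendsto_nlam (j : ℕ) :
    Tendsto (fun n : ℕ => (n:ℝ) * (1 - lam n j)) atTop (nhds ((j:ℝ) * ((j:ℝ)-1) / 2)) := by
  induction j with
  | zero => simpa [lam] using tendsto_const_nhds (x := (0:ℝ)) (f := (atTop : Filter ℕ))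
  | succ m ih =>
    have h1 : Tendsto (fun n : ℕ => ((n:ℝ) * (1 - lam n m)) * ((n:ℝ)/((n:ℝ)+m))
        + (m:ℝ) * ((n:ℝ)/((n:ℝ)+m))) atTop
        (nhds ((m:ℝ) * ((m:ℝ)-1) / 2 * 1 + (m:ℝ) * 1)) :=
      (ih.mul (tendsto_frac m)).add ((tendsto_const_nhds).mul (tendsto_frac m))
    have h2 : ((m:ℝ) * ((m:ℝ)-1) / 2 * 1 + (m:ℝ) * 1) = ((m+1:ℕ):ℝ) * (((m+1:ℕ):ℝ)-1) / 2 := by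
      push_cast; ring
    rw [h2] at h1
    refine h1.congr' ?_
    filter_upwards [eventually_ge_atTop 1] with n hn
    have hnc : (n:ℝ) + m ≠ 0 := by positivity
    rw [lam_succ]
    field_simp
    ring

lemma tendsto_nPn : ∀ j : ℕ, ∀ m < j,
    Tendsto (fun n : ℕ => (n:ℝ) * (Pn n j).coeff m) atTop
      (nhds (if m + 1 = j then (j:ℝ)*((j:ℝ)-1)/2 else 0)) := by
  intro j
  induction j with
  | zero => omega
  | succ j ih =>
    have hA : ∀ m ≤ j, Tendsto (fun n : ℕ => (Pn n j).coeff m) atTop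
        (nhds (if m = j then 1 else 0)) := by
      intro m hm
      rcases eq_or_lt_of_le hm with h | h
      · subst h
        simp only [if_pos rfl]
        exact (tendsto_lam m).congr fun n => (Pn_coeff_self n m).symm
      · rw [if_neg h.ne]
        have h2 := (ih m h).mul
          ((tendsto_natCast_atTop_atTop (R := ℝ)).inv_tendsto_atTop)
        rw [mul_zero] at h2
        refine h2.congr' ?_
        filter_upwards [eventually_ge_atTop 1] with n hn
        have : (n:ℝ) ≠ 0 := by positivity
        rw [Pi.inv_apply]
        field_simp
    intro m hm
    match m with
    | 0 =>
      match j with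
      | 0 =>
        have : ∀ n : ℕ, (n:ℝ) * (Pn n 1).coeff 0 = 0 := by
          intro n
          rw [Pn_coeff_zero_succ]
          simp
        simp only [this, if_pos rfl]
        norm_num
      | j+1 =>
        have h2 := (tendsto_const_div_shift ((j:ℝ)+1) (j+1)).mul (ih 0 (by omega))
        rw [zero_mul] at h2
        have h3 : (if 0 + 1 = j + 1 + 1 then ((j+1+1:ℕ):ℝ)*(((j+1+1:ℕ):ℝ)-1)/2 else 0) = 0 := by
          rw [if_neg (by omega)]
        rw [h3]
        refine h2.congr fun n => ?_
        conv_rhs => rw [Pn_coeff_zero_succ]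
        push_cast
        ring
    | m'+1 =>
      have hm' : m' < j := by omega
      have h1 := ((tendsto_frac j).mul (ih m' hm')).add
        (((tendsto_const_nhds (x := (j:ℝ)) (f := (atTop : Filter ℕ))).mul
          (tendsto_frac j)).mul (hA (m'+1) (by omega)))
      have heq : ∀ n : ℕ, ((n:ℝ)/((n:ℝ)+j)) * ((n:ℝ) * (Pn n j).coeff m')
          + (((j:ℝ)) * ((n:ℝ)/((n:ℝ)+j))) * (Pn n j).coeff (m'+1)
          = (n:ℝ) * (Pn n (j+1)).coeff (m'+1) := by
        intro n
        rw [Pn_coeff_succ]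
        ring
      have h2 := h1.congr heq
      convert h2 using 2
      by_cases hcase : m' + 1 = j
      · simp only [if_pos hcase, if_pos (show m' + 1 + 1 = j + 1 by omega)]
        subst hcase
        push_cast
        ring
      · simp only [if_neg hcase, if_neg (show ¬(m' + 1 + 1 = j + 1) by omega)]
        ring
/-- The coefficients of the monic eigenpolynomials of degree `k` of the Beta operators
converge, as `n → ∞`, to `a*(k,j) = ∏_{l=1}^{k-j} ((k+1-l)(k-l))/(l(l-2k+1))`. -/
theorem betaOp_eigenpolynomial_coeff_limit (k : ℕ) (hk : 2 ≤ k)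
    (q : ℕ → Polynomial ℝ)
    (hq : ∀ n : ℕ, 1 ≤ n → (q n).Monic ∧ (q n).natDegree = k ∧
      ∀ x ∈ Set.Icc (0:ℝ) 1,
        betaOp n (fun t => (q n).eval t) x =
          ((Nat.factorial (n - 1) : ℝ) * (n : ℝ) ^ k / (Nat.factorial (n + k - 1) : ℝ))
            * (q n).eval x) :
    ∀ j : ℕ, j ≤ k →
      Tendsto (fun n : ℕ => (q n).coeff j) atTop
        (nhds (∏ l ∈ Finset.Icc 1 (k - j),
          (((k : ℝ) + 1 - l) * ((k : ℝ) - l)) / ((l : ℝ) * ((l : ℝ) - 2 * k + 1)))) := by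
  set A : ℕ → ℝ := fun m => ∏ l ∈ Finset.Icc 1 (k - m),
    (((k : ℝ) + 1 - l) * ((k : ℝ) - l)) / ((l : ℝ) * ((l : ℝ) - 2 * k + 1)) with hA
  have main : ∀ d : ℕ, ∀ m : ℕ, m ≤ k → k - m ≤ d →
      Tendsto (fun n : ℕ => (q n).coeff m) atTop (nhds (A m)) := by
    intro d
    induction d with
    | zero =>
      intro m hm hd
      have hmk : m = k := by omega
      subst hmk
      have hAm : A m = 1 := by simp [hA]
      rw [hAm]
      refine tendsto_const_nhds.congr' ?_
      filter_upwards [eventually_ge_atTop 1] with n hn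
      obtain ⟨hmon, hdeg, _⟩ := hq n hn
      rw [← hdeg]
      exact hmon.coeff_natDegree.symm
    | succ d ihd =>
      intro m hm hd
      rcases Nat.lt_or_ge (k - m) (d+1) with h | h
      · exact ihd m hm (by omega)
      have hkm : k - m = d + 1 := by omega
      have hmlt : m < k := by omega
      -- the denominator
      have limD : Tendsto (fun n : ℕ => (n:ℝ) * (lam n k - lam n m)) atTop
          (nhds (((m:ℝ)*((m:ℝ)-1) - (k:ℝ)*((k:ℝ)-1))/2)) := by
        have := (tendsto_nlam m).sub (tendsto_nlam k)
        have heq : ∀ n : ℕ, (n:ℝ) * (1 - lam n m) - (n:ℝ) * (1 - lam n k)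
            = (n:ℝ) * (lam n k - lam n m) := fun n => by ring
        have h2 : ((m:ℝ)*((m:ℝ)-1)/2 - (k:ℝ)*((k:ℝ)-1)/2)
            = ((m:ℝ)*((m:ℝ)-1) - (k:ℝ)*((k:ℝ)-1))/2 := by ring
        rw [h2] at this
        exact this.congr heq
      have hD0 : (((m:ℝ)*((m:ℝ)-1) - (k:ℝ)*((k:ℝ)-1))/2) ≠ 0 := by
        have h1 : (m:ℝ) + 1 ≤ (k:ℝ) := by exact_mod_cast hmlt
        have h2 : (2:ℝ) ≤ (k:ℝ) := by exact_mod_cast hk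
        have h3 : (0:ℝ) ≤ m := Nat.cast_nonneg m
        nlinarith
      -- the numerator
      have limS : Tendsto (fun n : ℕ => ∑ j ∈ Icc (m+1) k,
          (q n).coeff j * ((n:ℝ) * (Pn n j).coeff m)) atTop
          (nhds (∑ j ∈ Icc (m+1) k,
            A j * (if m + 1 = j then (j:ℝ)*((j:ℝ)-1)/2 else 0))) := by
        refine tendsto_finset_sum _ fun j hj => ?_
        obtain ⟨hj1, hj2⟩ := Finset.mem_Icc.mp hj
        exact (ihd j hj2 (by omega)).mul (tendsto_nPn j m (by omega))
      have hsum : (∑ j ∈ Icc (m+1) k,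
          A j * (if m + 1 = j then (j:ℝ)*((j:ℝ)-1)/2 else 0))
          = A (m+1) * (((m+1:ℕ):ℝ)*(((m+1:ℕ):ℝ)-1)/2) := by
        rw [Finset.sum_eq_single_of_mem (m+1) (Finset.mem_Icc.mpr ⟨le_refl _, by omega⟩)]
        · rw [if_pos rfl]
        · intro j hj hne
          rw [if_neg (fun h => hne h.symm), mul_zero]
      rw [hsum] at limS
      -- eventual formula for the coefficient
      have hquot := limS.div limD hD0
      have hAformula : A m = (A (m+1) * (((m+1:ℕ):ℝ)*(((m+1:ℕ):ℝ)-1)/2))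
          / (((m:ℝ)*((m:ℝ)-1) - (k:ℝ)*((k:ℝ)-1))/2) := by
        have hup : k - m = (k - (m+1)) + 1 := by omega
        have hprod : A m = A (m+1) * ((((k:ℝ) + 1 - ((k-m:ℕ):ℝ)) * ((k:ℝ) - ((k-m:ℕ):ℝ)))
            / (((k-m:ℕ):ℝ) * (((k-m:ℕ):ℝ) - 2*(k:ℝ) + 1))) := by
          rw [hA]
          simp only []
          rw [hup, Finset.prod_Icc_succ_top (by omega)]
        rw [hprod]
        have hcast : ((k-m:ℕ):ℝ) = (k:ℝ) - (m:ℝ) := by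
          rw [Nat.cast_sub hm]
        rw [hcast]
        have e1 : (k:ℝ) - m ≠ 0 := by
          have : (m:ℝ) < k := by exact_mod_cast hmlt
          linarith
        have e2 : (k:ℝ) - m - 2*k + 1 ≠ 0 := by
          have h1 : (m:ℝ) ≥ 0 := Nat.cast_nonneg m
          have h2 : (2:ℝ) ≤ (k:ℝ) := by exact_mod_cast hk
          nlinarith
        have e3 : ((k:ℝ) - m) * (((k:ℝ) - m) - 2*(k:ℝ) + 1) ≠ 0 := mul_ne_zero e1 e2
        have key : (((k:ℝ) + 1 - ((k:ℝ) - (m:ℝ))) * ((k:ℝ) - ((k:ℝ) - (m:ℝ))))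
            / (((k:ℝ) - (m:ℝ)) * (((k:ℝ) - (m:ℝ)) - 2*(k:ℝ) + 1))
            = (((m+1:ℕ):ℝ)*(((m+1:ℕ):ℝ)-1)/2) / (((m:ℝ)*((m:ℝ)-1) - (k:ℝ)*((k:ℝ)-1))/2) := by
          rw [div_eq_div_iff e3 hD0]
          push_cast
          ring
        rw [key]
        ring
      rw [← hAformula] at hquot
      refine hquot.congr' ?_
      have hDne := limD.eventually_ne hD0
      filter_upwards [eventually_ge_atTop 1, hDne] with n hn hDn
      obtain ⟨hmon, hdeg, heig⟩ := hq n hn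
      have hre := eigen_rearranged hn hdeg heig (le_of_lt hmlt)
      rw [eta_eq hn k] at hre
      have hmul : ((n:ℝ) * (lam n k - lam n m)) * (q n).coeff m
          = ∑ j ∈ Icc (m+1) k, (q n).coeff j * ((n:ℝ) * (Pn n j).coeff m) := by
        rw [show ((n:ℝ) * (lam n k - lam n m)) * (q n).coeff m
          = (n:ℝ) * ((lam n k - lam n m) * (q n).coeff m) from by ring, hre, Finset.mul_sum]
        exact Finset.sum_congr rfl fun j _ => by ring
      simp only [Pi.div_apply]
      rw [← hmul]
      exact mul_div_cancel_left₀ _ hDn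
  intro j hj
  exact main (k - j) j hj le_rfl
end

section
/- For every integer n ≥ 2 there is no positive linear operator Q : C([0,1]) → C([0,1]) (positive meaning f ≥ 0 implies Qf ≥ 0) such that 𝔅̄ₙ(Qf)(x) = Bₙf(x) for all f ∈ C([0,1]) and all x ∈ [0,1]; i.e. the Bernstein operator admits no decomposition Bₙ = 𝔅̄ₙ ∘ Q with Q a positive linear endomorphism of C([0,1]). -/
set_option maxHeartbeats 1000000

open Real
open MeasureTheory Finset unitInterval


lemma rbeta_integrable {c d : ℝ} (hc : -1 < c) (hd : -1 < d) :
    IntervalIntegrable (fun t : ℝ => t ^ c * (1 - t) ^ d) volume 0 1 := by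
  have hcv := Complex.betaIntegral_convergent (u := (c : ℂ) + 1) (v := (d : ℂ) + 1)
    (by simp; linarith) (by simp; linarith)
  rw [intervalIntegrable_iff_integrableOn_Ioc_of_le (by norm_num)] at hcv ⊢
  have heq : Set.EqOn (fun t : ℝ => (t : ℂ) ^ ((c : ℂ) + 1 - 1) * ((1 : ℂ) - t) ^ ((d : ℂ) + 1 - 1))
      (fun t : ℝ => ((t ^ c * (1 - t) ^ d : ℝ) : ℂ)) (Set.Ioc (0:ℝ) 1) := by
    intro t ht
    simp only [add_sub_cancel_right]
    rw [Complex.ofReal_mul, Complex.ofReal_cpow ht.1.le,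
      Complex.ofReal_cpow (by linarith [ht.2] : (0:ℝ) ≤ 1 - t)]
    push_cast
    ring
  have h2 : IntegrableOn (fun t : ℝ => ((t ^ c * (1 - t) ^ d : ℝ) : ℂ)) (Set.Ioc (0:ℝ) 1) volume :=
    hcv.congr_fun heq measurableSet_Ioc
  simpa [IntegrableOn] using h2.re

lemma rbeta_value {a b : ℝ} (ha : 0 < a) (hb : 0 < b) :
    ∫ t in (0:ℝ)..1, t ^ (a - 1) * (1 - t) ^ (b - 1)
      = Real.Gamma a * Real.Gamma b / Real.Gamma (a + b) := by
  have key := Complex.Gamma_mul_Gamma_eq_betaIntegral (s := (a : ℂ)) (t := (b : ℂ))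
    (by simpa using ha) (by simpa using hb)
  have heq : Complex.betaIntegral (a : ℂ) (b : ℂ)
      = ((∫ t in (0:ℝ)..1, t ^ (a - 1) * (1 - t) ^ (b - 1) : ℝ) : ℂ) := by
    rw [Complex.betaIntegral, ← intervalIntegral.integral_ofReal]
    refine intervalIntegral.integral_congr (fun t ht => ?_)
    rw [Set.uIcc_of_le (by norm_num : (0:ℝ) ≤ 1)] at ht
    rw [Complex.ofReal_mul, Complex.ofReal_cpow ht.1,
      Complex.ofReal_cpow (by linarith [ht.2] : (0:ℝ) ≤ 1 - t)]
    push_cast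
    ring
  rw [heq] at key
  have hne : Real.Gamma (a + b) ≠ 0 := (Real.Gamma_pos_of_pos (by linarith)).ne'
  have : ((Real.Gamma a * Real.Gamma b : ℝ) : ℂ)
      = ((Real.Gamma (a + b) * ∫ t in (0:ℝ)..1, t ^ (a - 1) * (1 - t) ^ (b - 1) : ℝ) : ℂ) := by
    push_cast
    rw [← Complex.Gamma_ofReal, ← Complex.Gamma_ofReal, ← Complex.Gamma_ofReal]
    push_cast at key ⊢
    rw [key]
  have h4 := Complex.ofReal_inj.mp this
  field_simp
  linarith [h4]

lemma rbeta_integrable_mul {c d : ℝ} (hc : -1 < c) (hd : -1 < d) {H : ℝ → ℝ}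
    (hH : Continuous H) {M : ℝ} (hM : ∀ t, |H t| ≤ M) :
    IntervalIntegrable (fun t : ℝ => t ^ c * (1 - t) ^ d * H t) volume 0 1 := by
  have base := rbeta_integrable hc hd
  rw [intervalIntegrable_iff_integrableOn_Ioc_of_le (by norm_num)] at base ⊢
  have h1 : IntegrableOn (fun t : ℝ => H t * (t ^ c * (1 - t) ^ d)) (Set.Ioc (0:ℝ) 1) volume :=
    base.bdd_mul (c := M) hH.aestronglyMeasurable.restrict (ae_of_all _ fun t => by simpa [Real.norm_eq_abs] using hM t)
  simpa [mul_comm] using h1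

lemma cs_key {c1 d1 c2 d2 cm dm : ℝ} (hc1 : -1 < c1) (hd1 : -1 < d1) (hc2 : -1 < c2)
    (hd2 : -1 < d2) (hcm : cm = (c1 + c2) / 2) (hdm : dm = (d1 + d2) / 2)
    {H : ℝ → ℝ} (hH : Continuous H) (hH0 : ∀ t, 0 ≤ H t) {M : ℝ} (hM : ∀ t, |H t| ≤ M)
    {Fl Fr : ℝ}
    (hFl : (∫ t in (0:ℝ)..1, t ^ c1 * (1 - t) ^ d1 * H t) = Fl)
    (hFr : (∫ t in (0:ℝ)..1, t ^ c2 * (1 - t) ^ d2 * H t) = Fr)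
    (hFlpos : 0 < Fl) (hFrpos : 0 < Fr) :
    (∫ t in (0:ℝ)..1, t ^ cm * (1 - t) ^ dm * H t) ^ 2 ≤ Fl * Fr := by
  have hcm' : -1 < cm := by rw [hcm]; linarith
  have hdm' : -1 < dm := by rw [hdm]; linarith
  have Il := rbeta_integrable_mul hc1 hd1 hH hM
  have Ir := rbeta_integrable_mul hc2 hd2 hH hM
  have Im := rbeta_integrable_mul hcm' hdm' hH hM
  set Fm : ℝ := ∫ t in (0:ℝ)..1, t ^ cm * (1 - t) ^ dm * H t with hFm
  have hFm0 : 0 ≤ Fm := by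
    refine intervalIntegral.integral_nonneg (by norm_num) (fun u hu => ?_)
    have h1 : (0:ℝ) ≤ u ^ cm := Real.rpow_nonneg hu.1 _
    have h2 : (0:ℝ) ≤ (1 - u) ^ dm := Real.rpow_nonneg (by linarith [hu.2]) _
    have := hH0 u
    positivity
  have hs : 0 < Real.sqrt (Fl * Fr) := Real.sqrt_pos.mpr (by positivity)
  -- pointwise inequality a.e. on [0,1]
  have mono : (∫ t in (0:ℝ)..1, 2 * Real.sqrt (Fl * Fr) * (t ^ cm * (1 - t) ^ dm * H t))
      ≤ ∫ t in (0:ℝ)..1, (Fr * (t ^ c1 * (1 - t) ^ d1 * H t) + Fl * (t ^ c2 * (1 - t) ^ d2 * H t)) := by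
    refine intervalIntegral.integral_mono_ae_restrict (by norm_num) (Im.const_mul _)
      ((Il.const_mul _).add (Ir.const_mul _)) ?_
    rw [Measure.restrict_congr_set (Ioo_ae_eq_Icc (μ := volume) (a := (0:ℝ)) (b := 1)).symm]
    filter_upwards [ae_restrict_mem measurableSet_Ioo] with t ht
    obtain ⟨ht0, ht1⟩ := ht
    have h1t : (0:ℝ) < 1 - t := by linarith
    set P1 : ℝ := t ^ c1 * (1 - t) ^ d1 * H t with hP1
    set P2 : ℝ := t ^ c2 * (1 - t) ^ d2 * H t with hP2
    set Pm : ℝ := t ^ cm * (1 - t) ^ dm * H t with hPm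
    have hP10 : 0 ≤ P1 := by
      have h1 : (0:ℝ) ≤ t ^ c1 := Real.rpow_nonneg ht0.le _
      have h2 : (0:ℝ) ≤ (1 - t) ^ d1 := Real.rpow_nonneg h1t.le _
      have := hH0 t; positivity
    have hP20 : 0 ≤ P2 := by
      have h1 : (0:ℝ) ≤ t ^ c2 := Real.rpow_nonneg ht0.le _
      have h2 : (0:ℝ) ≤ (1 - t) ^ d2 := Real.rpow_nonneg h1t.le _
      have := hH0 t; positivity
    have hPm0 : 0 ≤ Pm := by
      have h1 : (0:ℝ) ≤ t ^ cm := Real.rpow_nonneg ht0.le _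
      have h2 : (0:ℝ) ≤ (1 - t) ^ dm := Real.rpow_nonneg h1t.le _
      have := hH0 t; positivity
    have hPmsq : Pm ^ 2 = P1 * P2 := by
      rw [hPm, hP1, hP2, hcm, hdm]
      have e1 : (t ^ ((c1 + c2) / 2)) ^ 2 = t ^ c1 * t ^ c2 := by
        rw [sq, ← Real.rpow_add ht0, ← Real.rpow_add ht0]
        ring_nf
      have e2 : ((1 - t) ^ ((d1 + d2) / 2)) ^ 2 = (1 - t) ^ d1 * (1 - t) ^ d2 := by
        rw [sq, ← Real.rpow_add h1t, ← Real.rpow_add h1t]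
        ring_nf
      linear_combination (((1 - t) ^ ((d1 + d2) / 2)) ^ 2 * (H t) ^ 2) * e1
        + (t ^ c1 * t ^ c2 * (H t) ^ 2) * e2
    have e3 : Real.sqrt (Fr * P1) * Real.sqrt (Fl * P2) = Real.sqrt (Fl * Fr) * Pm := by
      rw [← Real.sqrt_mul (by positivity)]
      rw [show Fr * P1 * (Fl * P2) = (Fl * Fr) * Pm ^ 2 by rw [hPmsq]; ring]
      rw [Real.sqrt_mul (by positivity), Real.sqrt_sq hPm0]
    have e4 : Real.sqrt (Fr * P1) ^ 2 = Fr * P1 := Real.sq_sqrt (by positivity)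
    have e5 : Real.sqrt (Fl * P2) ^ 2 = Fl * P2 := Real.sq_sqrt (by positivity)
    nlinarith [sq_nonneg (Real.sqrt (Fr * P1) - Real.sqrt (Fl * P2)), e3, e4, e5]
  rw [intervalIntegral.integral_const_mul] at mono
  rw [intervalIntegral.integral_add (Il.const_mul _) (Ir.const_mul _)] at mono
  rw [intervalIntegral.integral_const_mul, intervalIntegral.integral_const_mul, hFl, hFr] at mono
  have h6 : Real.sqrt (Fl * Fr) * Real.sqrt (Fl * Fr) = Fl * Fr :=
    Real.mul_self_sqrt (by positivity)
  have key : Real.sqrt (Fl * Fr) * Fm ≤ Real.sqrt (Fl * Fr) * Real.sqrt (Fl * Fr) := by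
    rw [h6]; linarith
  have h7 : Fm ≤ Real.sqrt (Fl * Fr) := le_of_mul_le_mul_left key hs
  calc Fm ^ 2 ≤ Real.sqrt (Fl * Fr) ^ 2 := by
        exact pow_le_pow_left₀ hFm0 h7 2
    _ = Fl * Fr := Real.sq_sqrt (by positivity)

lemma pow45 (k : ℕ) (hk : 5 ≤ k) : 2*3^k*((k:ℝ)-2) < 4^k*((k:ℝ)-3) := by
  induction k, hk using Nat.le_induction with
  | base => norm_num
  | succ k hk IH =>
    have hk5 : (5:ℝ) ≤ (k:ℝ) := by exact_mod_cast hk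
    have h3 : (0:ℝ) < 3^k := by positivity
    have h := mul_lt_mul_of_pos_left IH (show (0:ℝ) < 4*((k:ℝ)-2) by linarith)
    have hn3 : (0:ℝ) < (k:ℝ)-3 := by linarith
    push_cast
    have goal' : 2*3^(k+1)*((k:ℝ)+1-2) * ((k:ℝ)-3) < 4^(k+1)*((k:ℝ)+1-3) * ((k:ℝ)-3) := by
      have hpoly : 6*((k:ℝ)-1)*((k:ℝ)-3) ≤ 8*((k:ℝ)-2)^2 := by nlinarith
      calc 2*3^(k+1)*((k:ℝ)+1-2)*((k:ℝ)-3) = (6*((k:ℝ)-1)*((k:ℝ)-3))*3^k := by ring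
        _ ≤ (8*((k:ℝ)-2)^2)*3^k := mul_le_mul_of_nonneg_right hpoly h3.le
        _ = 4*((k:ℝ)-2) * (2*3^k*((k:ℝ)-2)) := by ring
        _ < 4*((k:ℝ)-2) * (4^k*((k:ℝ)-3)) := h
        _ = 4^(k+1)*((k:ℝ)+1-3)*((k:ℝ)-3) := by ring
    exact lt_of_mul_lt_mul_right goal' hn3.le

/-- Extend a continuous function on `[0,1]` to all of `ℝ`. -/
noncomputable def ext01 (f : C(Set.Icc (0:ℝ) 1, ℝ)) : ℝ → ℝ :=
  Set.IccExtend (by norm_num : (0:ℝ) ≤ 1) f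

/-- There is no positive linear operator `Q` on `C[0,1]` with `Bₙ = 𝔅̄ₙ ∘ Q`, `n ≥ 2`. -/
theorem no_positive_factor (n : ℕ) (hn : 2 ≤ n) :
    ¬ ∃ Q : C(Set.Icc (0:ℝ) 1, ℝ) →ₗ[ℝ] C(Set.Icc (0:ℝ) 1, ℝ),
        (∀ f : C(Set.Icc (0:ℝ) 1, ℝ), (∀ t, 0 ≤ f t) → ∀ t, 0 ≤ Q f t) ∧
        (∀ f : C(Set.Icc (0:ℝ) 1, ℝ), ∀ x ∈ Set.Icc (0:ℝ) 1,
          betaOp n (ext01 (Q f)) x = bernsteinOp n (ext01 f) x) := by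
  rintro ⟨Q, hQ1, hQ2⟩
  have hn0 : (0:ℝ) < (n:ℝ) := by
    have : 0 < n := by omega
    exact_mod_cast this
  set F0 : C(Set.Icc (0:ℝ) 1, ℝ) := ⟨fun t => max (1 - (n:ℝ) * t.1) 0, by fun_prop⟩ with hF0def
  have hF0nn : ∀ t, 0 ≤ F0 t := fun t => le_max_right _ _
  have hpos : ∀ t, 0 ≤ (Q F0) t := hQ1 F0 hF0nn
  set H : ℝ → ℝ := ext01 (Q F0) with hHdef
  have hH : Continuous H := by
    rw [hHdef, ext01]
    exact (Q F0).continuous.Icc_extend'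
  have hH0 : ∀ t, 0 ≤ H t := fun t => hpos _
  have hM : ∀ t, |H t| ≤ ‖Q F0‖ := fun t => by
    have := (Q F0).norm_coe_le_norm (Set.projIcc 0 1 (by norm_num) t)
    rw [Real.norm_eq_abs] at this
    exact this
  -- value of the extension of F0 at the Bernstein nodes
  have hnode : ∀ k : ℕ, k ≤ n → ext01 F0 ((k:ℝ)/(n:ℝ)) = if k = 0 then 1 else 0 := by
    intro k hk
    have hkn : ((k:ℝ)/(n:ℝ)) ∈ Set.Icc (0:ℝ) 1 := ⟨by positivity, by
      rw [div_le_one hn0]; exact_mod_cast hk⟩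
    have hext : ext01 F0 ((k:ℝ)/(n:ℝ)) = F0 ⟨_, hkn⟩ := by
      rw [ext01]; exact Set.IccExtend_of_mem _ _ hkn
    rw [hext, hF0def]
    simp only [ContinuousMap.coe_mk]
    have harg : (n:ℝ) * ((k:ℝ)/(n:ℝ)) = (k:ℝ) := by field_simp
    rw [harg]
    rcases Nat.eq_zero_or_pos k with hk0 | hk0
    · subst hk0; norm_num
    · rw [if_neg (Nat.pos_iff_ne_zero.mp hk0)]
      have : (1:ℝ) ≤ (k:ℝ) := by exact_mod_cast hk0
      exact max_eq_right (by linarith)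
  have hBern : ∀ x : ℝ, bernsteinOp n (ext01 F0) x = (1 - x) ^ n := by
    intro x
    rw [bernsteinOp, Finset.sum_eq_single 0]
    · have h0 := hnode 0 (by omega)
      norm_num at h0 ⊢
      simp [h0]
    · intro k hk hk0
      rw [hnode k (by simpa [Nat.lt_succ_iff] using Finset.mem_range.mp hk), if_neg hk0]
      ring
    · intro h
      exact absurd (Finset.mem_range.mpr (by omega)) h
  -- the key identity for interior points
  have main : ∀ x : ℝ, 0 < x → x < 1 →
      (∫ t in (0:ℝ)..1, t ^ ((n:ℝ)*x - 1) * (1 - t) ^ ((n:ℝ)*(1-x) - 1) * H t)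
        = Real.Gamma ((n:ℝ)*x) * Real.Gamma ((n:ℝ)*(1-x)) / Real.Gamma (n:ℝ) * (1-x)^n := by
    intro x hx0 hx1
    have heq := hQ2 F0 x ⟨hx0.le, hx1.le⟩
    rw [betaOp, if_neg (ne_of_gt hx0), if_neg (ne_of_lt hx1), hBern x, ← hHdef] at heq
    have hD := rbeta_value (a := (n:ℝ)*x) (b := (n:ℝ)*(1-x)) (mul_pos hn0 hx0)
      (mul_pos hn0 (by linarith))
    rw [show (n:ℝ)*x + (n:ℝ)*(1-x) = (n:ℝ) by ring] at hD
    rw [hD] at heq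
    have hΓ : 0 < Real.Gamma ((n:ℝ)*x) * Real.Gamma ((n:ℝ)*(1-x)) / Real.Gamma (n:ℝ) :=
      div_pos (mul_pos (Real.Gamma_pos_of_pos (mul_pos hn0 hx0))
        (Real.Gamma_pos_of_pos (mul_pos hn0 (by linarith)))) (Real.Gamma_pos_of_pos hn0)
    rw [div_eq_iff hΓ.ne'] at heq
    rw [heq]; ring
  -- the Cauchy–Schwarz consequence
  have combine : ∀ l m r Gl Gm Gr pl pm pr : ℝ, 0 < l → l < 1 → 0 < r → r < 1 →
      l + r = m * 2 →
      Real.Gamma ((n:ℝ)*l) * Real.Gamma ((n:ℝ)*(1-l)) / Real.Gamma (n:ℝ) = Gl →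
      Real.Gamma ((n:ℝ)*m) * Real.Gamma ((n:ℝ)*(1-m)) / Real.Gamma (n:ℝ) = Gm →
      Real.Gamma ((n:ℝ)*r) * Real.Gamma ((n:ℝ)*(1-r)) / Real.Gamma (n:ℝ) = Gr →
      (1-l)^n = pl → (1-m)^n = pm → (1-r)^n = pr →
      0 < Gl * pl → 0 < Gr * pr →
      (Gm * pm)^2 ≤ (Gl * pl) * (Gr * pr) := by
    intro l m r Gl Gm Gr pl pm pr hl0 hl1 hr0 hr1 hlr hGl hGm hGr hpl hpm hpr hP1 hP2
    have hm0 : 0 < m := by linarith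
    have hm1 : m < 1 := by linarith
    have hFl := main l hl0 hl1
    have hFr := main r hr0 hr1
    have hFm := main m hm0 hm1
    rw [hGl, hpl] at hFl
    rw [hGr, hpr] at hFr
    rw [hGm, hpm] at hFm
    rw [← hFm]
    exact cs_key (c1 := (n:ℝ)*l - 1) (d1 := (n:ℝ)*(1-l) - 1) (c2 := (n:ℝ)*r - 1)
      (d2 := (n:ℝ)*(1-r) - 1) (cm := (n:ℝ)*m - 1) (dm := (n:ℝ)*(1-m) - 1)
      (by linarith [mul_pos hn0 hl0]) (by linarith [mul_pos hn0 (show (0:ℝ) < 1-l by linarith)])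
      (by linarith [mul_pos hn0 hr0]) (by linarith [mul_pos hn0 (show (0:ℝ) < 1-r by linarith)])
      (by linear_combination (-(n:ℝ)/2) * hlr) (by linear_combination ((n:ℝ)/2) * hlr)
      hH hH0 hM hFl hFr hP1 hP2
  -- Gamma values
  have sqpi : Real.sqrt π * Real.sqrt π = π := Real.mul_self_sqrt Real.pi_pos.le
  have g1 : Real.Gamma 1 = 1 := Real.Gamma_one
  have g2 : Real.Gamma 2 = 1 := Real.Gamma_two
  have g3 : Real.Gamma 3 = 2 := by
    rw [show (3:ℝ) = 2 + 1 by norm_num, Real.Gamma_add_one (by norm_num), g2]; norm_num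
  have g4 : Real.Gamma 4 = 6 := by
    rw [show (4:ℝ) = 3 + 1 by norm_num, Real.Gamma_add_one (by norm_num), g3]; norm_num
  have g12 : Real.Gamma (1/2) = Real.sqrt π := Real.Gamma_one_half_eq
  have g32 : Real.Gamma (3/2) = Real.sqrt π / 2 := by
    rw [show (3/2:ℝ) = 1/2 + 1 by norm_num, Real.Gamma_add_one (by norm_num), g12]; ring
  have g52 : Real.Gamma (5/2) = 3/4 * Real.sqrt π := by
    rw [show (5/2:ℝ) = 3/2 + 1 by norm_num, Real.Gamma_add_one (by norm_num), g32]; ring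
  rcases lt_or_ge n 5 with h5 | h5
  · interval_cases n
    · -- n = 2
      have g43 : Real.Gamma (4/3) = 1/3 * Real.Gamma (1/3) := by
        rw [show (4/3:ℝ) = 1/3 + 1 by norm_num, Real.Gamma_add_one (by norm_num)]
      have g53 : Real.Gamma (5/3) = 2/3 * Real.Gamma (2/3) := by
        rw [show (5/3:ℝ) = 2/3 + 1 by norm_num, Real.Gamma_add_one (by norm_num)]
      have s3sq : Real.sqrt 3 * Real.sqrt 3 = 3 := Real.mul_self_sqrt (by norm_num)
      have s3 : (0:ℝ) < Real.sqrt 3 := Real.sqrt_pos.mpr (by norm_num)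
      have gprod : Real.Gamma (1/3) * Real.Gamma (2/3) = π / (Real.sqrt 3 / 2) := by
        have h := Real.Gamma_mul_Gamma_one_sub (1/3)
        rw [show (1:ℝ) - 1/3 = 2/3 by norm_num, show π * (1/3) = π/3 by ring,
          Real.sin_pi_div_three] at h
        exact h
      have gprod' : Real.Gamma (1/3) * Real.Gamma (2/3) * Real.sqrt 3 = 2 * π := by
        rw [gprod]; field_simp
      have gsq : (Real.Gamma (1/3) * Real.Gamma (2/3))^2 * 3 = 4 * π^2 := by
        calc (Real.Gamma (1/3) * Real.Gamma (2/3))^2 * 3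
            = (Real.Gamma (1/3) * Real.Gamma (2/3))^2 * (Real.sqrt 3 * Real.sqrt 3) := by
              rw [s3sq]
          _ = (Real.Gamma (1/3) * Real.Gamma (2/3) * Real.sqrt 3)^2 := by ring
          _ = (2*π)^2 := by rw [gprod']
          _ = 4*π^2 := by ring
      have key := combine (2/3) (3/4) (5/6)
        (Real.Gamma (1/3) * Real.Gamma (2/3) / 3) (π/2)
        (2*(Real.Gamma (1/3) * Real.Gamma (2/3))/3) (1/9) (1/16) (1/36)
        (by norm_num) (by norm_num) (by norm_num) (by norm_num) (by norm_num)
        (by norm_num [g43, g2]; try ring)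
        (by norm_num [g32, g12, g2]; linear_combination sqpi/2)
        (by norm_num [g53, g2]; try ring)
        (by norm_num) (by norm_num) (by norm_num)
        (by positivity) (by positivity)
      nlinarith [key, gsq, mul_pos Real.pi_pos Real.pi_pos]
    · -- n = 3
      have key := combine (1/2) (2/3) (5/6) (π/8) (1/2) (3*π/8) (1/8) (1/27) (1/216)
        (by norm_num) (by norm_num) (by norm_num) (by norm_num) (by norm_num)
        (by norm_num [g32, g3]; linear_combination sqpi/8)
        (by norm_num [g2, g1, g3])
        (by norm_num [g52, g12, g3]; linear_combination 3*sqpi/8)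
        (by norm_num) (by norm_num) (by norm_num)
        (by positivity) (by positivity)
      nlinarith [key, Real.pi_lt_d2, Real.pi_pos]
    · -- n = 4
      have key := combine (1/2) (5/8) (3/4) (1/6) (π/16) (1/3) (1/16) (81/4096) (1/256)
        (by norm_num) (by norm_num) (by norm_num) (by norm_num) (by norm_num)
        (by norm_num [g2, g4, Nat.factorial])
        (by norm_num [g52, g32, g4, Nat.factorial]; linear_combination sqpi/16)
        (by norm_num [g3, g1, g4, Nat.factorial])
        (by norm_num) (by norm_num) (by norm_num)
        (by positivity) (by positivity)
      nlinarith [key, Real.pi_gt_d6, Real.pi_pos]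
  · -- n ≥ 5
    have hn5R : (5:ℝ) ≤ (n:ℝ) := by exact_mod_cast h5
    have hgpos : 0 < Real.Gamma ((n:ℝ)-3) := Real.Gamma_pos_of_pos (by linarith)
    set g := Real.Gamma ((n:ℝ)-3) with hgdef
    have e1 : Real.Gamma ((n:ℝ)-2) = ((n:ℝ)-3)*g := by
      have h := Real.Gamma_add_one (show ((n:ℝ)-3) ≠ 0 by linarith)
      rw [show (n:ℝ)-3+1 = (n:ℝ)-2 by ring] at h
      rw [h]
    have e2 : Real.Gamma ((n:ℝ)-1) = ((n:ℝ)-2)*(((n:ℝ)-3)*g) := by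
      have h := Real.Gamma_add_one (show ((n:ℝ)-2) ≠ 0 by linarith)
      rw [show (n:ℝ)-2+1 = (n:ℝ)-1 by ring] at h
      rw [h, e1]
    have hΓn : 0 < Real.Gamma (n:ℝ) := Real.Gamma_pos_of_pos hn0
    have e3 : Real.Gamma (n:ℝ) = ((n:ℝ)-1)*(((n:ℝ)-2)*(((n:ℝ)-3)*g)) := by
      have h := Real.Gamma_add_one (show ((n:ℝ)-1) ≠ 0 by linarith)
      rw [show (n:ℝ)-1+1 = (n:ℝ) by ring] at h
      rw [h, e2]
    set Γn := Real.Gamma (n:ℝ) with hΓdef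
    have hu : (0:ℝ) < (1/(n:ℝ))^n := by positivity
    set u := (1/(n:ℝ))^n with hudef
    have hl0 : 0 < ((n:ℝ)-3)/(n:ℝ) := div_pos (by linarith) hn0
    have hl1 : ((n:ℝ)-3)/(n:ℝ) < 1 := (div_lt_one hn0).mpr (by linarith)
    have hr0 : 0 < ((n:ℝ)-1)/(n:ℝ) := div_pos (by linarith) hn0
    have hr1 : ((n:ℝ)-1)/(n:ℝ) < 1 := (div_lt_one hn0).mpr (by linarith)
    have hlr : ((n:ℝ)-3)/(n:ℝ) + ((n:ℝ)-1)/(n:ℝ) = (((n:ℝ)-2)/(n:ℝ))*2 := by ring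
    have eal : (n:ℝ)*(((n:ℝ)-3)/(n:ℝ)) = (n:ℝ)-3 := by field_simp
    have ebl : 1 - ((n:ℝ)-3)/(n:ℝ) = 3/(n:ℝ) := by field_simp; ring
    have ecl : (n:ℝ)*(1-((n:ℝ)-3)/(n:ℝ)) = 3 := by rw [ebl]; field_simp
    have eam : (n:ℝ)*(((n:ℝ)-2)/(n:ℝ)) = (n:ℝ)-2 := by field_simp
    have ebm : 1 - ((n:ℝ)-2)/(n:ℝ) = 2/(n:ℝ) := by field_simp; ring
    have ecm : (n:ℝ)*(1-((n:ℝ)-2)/(n:ℝ)) = 2 := by rw [ebm]; field_simp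
    have ear : (n:ℝ)*(((n:ℝ)-1)/(n:ℝ)) = (n:ℝ)-1 := by field_simp
    have ebr : 1 - ((n:ℝ)-1)/(n:ℝ) = 1/(n:ℝ) := by field_simp; ring
    have ecr : (n:ℝ)*(1-((n:ℝ)-1)/(n:ℝ)) = 1 := by rw [ebr]; field_simp
    have hGl : Real.Gamma ((n:ℝ)*(((n:ℝ)-3)/(n:ℝ))) * Real.Gamma ((n:ℝ)*(1-((n:ℝ)-3)/(n:ℝ))) / Γn
        = 2*g/Γn := by rw [eal, ecl, g3, ← hgdef]; ring
    have hGm : Real.Gamma ((n:ℝ)*(((n:ℝ)-2)/(n:ℝ))) * Real.Gamma ((n:ℝ)*(1-((n:ℝ)-2)/(n:ℝ))) / Γn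
        = ((n:ℝ)-3)*g/Γn := by rw [eam, ecm, g2, e1]; ring
    have hGr : Real.Gamma ((n:ℝ)*(((n:ℝ)-1)/(n:ℝ))) * Real.Gamma ((n:ℝ)*(1-((n:ℝ)-1)/(n:ℝ))) / Γn
        = ((n:ℝ)-2)*(((n:ℝ)-3)*g)/Γn := by rw [ear, ecr, g1, e2]; ring
    have hpl : (1 - ((n:ℝ)-3)/(n:ℝ))^n = 3^n*u := by
      rw [ebl, hudef, ← mul_pow, mul_one_div]
    have hpm : (1 - ((n:ℝ)-2)/(n:ℝ))^n = 2^n*u := by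
      rw [ebm, hudef, ← mul_pow, mul_one_div]
    have hpr : (1 - ((n:ℝ)-1)/(n:ℝ))^n = u := by rw [ebr, hudef]
    have hP1 : 0 < (2*g/Γn)*(3^n*u) :=
      mul_pos (div_pos (by linarith) hΓn) (mul_pos (by positivity) hu)
    have hP2 : 0 < (((n:ℝ)-2)*(((n:ℝ)-3)*g)/Γn)*u :=
      mul_pos (div_pos (mul_pos (by linarith) (mul_pos (by linarith) hgpos)) hΓn) hu
    have key := combine (((n:ℝ)-3)/(n:ℝ)) (((n:ℝ)-2)/(n:ℝ)) (((n:ℝ)-1)/(n:ℝ))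
      (2*g/Γn) (((n:ℝ)-3)*g/Γn) (((n:ℝ)-2)*(((n:ℝ)-3)*g)/Γn)
      (3^n*u) (2^n*u) u hl0 hl1 hr0 hr1 hlr hGl hGm hGr hpl hpm hpr hP1 hP2
    have expand1 : (((n:ℝ)-3)*g/Γn * (2^n*u))^2
        = (((n:ℝ)-3)^2*((2:ℝ)^n*(2:ℝ)^n)) * (g/Γn*u)^2 := by ring
    have expand2 : (2*g/Γn*(3^n*u)) * (((n:ℝ)-2)*(((n:ℝ)-3)*g)/Γn * u)
        = (2*3^n*(((n:ℝ)-2)*((n:ℝ)-3))) * (g/Γn*u)^2 := by ring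
    rw [expand1, expand2] at key
    have hq : 0 < (g/Γn*u)^2 := pow_pos (mul_pos (div_pos hgpos hΓn) hu) 2
    have hfin := (mul_le_mul_iff_of_pos_right hq).mp key
    have h4 : (2:ℝ)^n*(2:ℝ)^n = 4^n := by rw [← mul_pow]; norm_num
    rw [h4] at hfin
    have hp45 := pow45 n h5
    have hprod := mul_lt_mul_of_pos_right hp45 (show (0:ℝ) < (n:ℝ)-3 by linarith)
    have e5 : 2*3^n*((n:ℝ)-2) * ((n:ℝ)-3) = 2*3^n*(((n:ℝ)-2)*((n:ℝ)-3)) := by ring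
    have e6 : (4:ℝ)^n*((n:ℝ)-3) * ((n:ℝ)-3) = ((n:ℝ)-3)^2*4^n := by ring
    rw [e5, e6] at hprod
    linarith [hfin, hprod]
end

section
/- For every n ≥ 1 and every j ≥ 0, the Beta operator maps the polynomial qⱼ(x) = (1/nʲ)·Σ_{k=0}^{j} (−1)^{j−k}·((n−1+k)!/(n−1)!)·S(j,k)·x^k to the monomial e_j, i.e. 𝔅̄ₙqⱼ(x) = xʲ for all x ∈ [0,1]. Here S(j,k) are the Stirling numbers of the second kind. (This gives the explicit formula for 𝔅̄ₙ⁻¹e_j.) -/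
open MeasureTheory Finset

/-- The Stirling numbers of the second kind. -/
def stirling2 : ℕ → ℕ → ℕ
  | 0, 0 => 1
  | 0, _ + 1 => 0
  | _ + 1, 0 => 0
  | j + 1, k + 1 => (k + 1) * stirling2 j (k + 1) + stirling2 j k

lemma stirling2_eq_zero_of_lt : ∀ j k, j < k → stirling2 j k = 0
  | 0, _+1, _ => rfl
  | j+1, k+1, h => by
      have h1 := stirling2_eq_zero_of_lt j (k+1) (by omega)
      have h2 := stirling2_eq_zero_of_lt j k (by omega)
      simp [stirling2, h1, h2]

/-- Key combinatorial identity: alternating Stirling sum of rising factorials. -/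
lemma stirling_rising (j : ℕ) (y : ℝ) :
    ∑ k ∈ Finset.range (j+1), (-1:ℝ)^(j-k) * (stirling2 j k : ℝ) *
      ∏ i ∈ Finset.range k, (y + i) = y ^ j := by
  induction j with
  | zero => simp [stirling2]
  | succ j ih =>
    set P : ℕ → ℝ := fun k => ∏ i ∈ Finset.range k, (y + i) with hP
    have hPsucc : ∀ k, P (k+1) = P k * (y + k) := fun k => Finset.prod_range_succ _ _
    -- rewrite target sum
    rw [Finset.sum_range_succ']
    have h0 : (-1:ℝ)^(j+1-0) * (stirling2 (j+1) 0 : ℝ) * P 0 = 0 := by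
      simp [stirling2]
    rw [h0, add_zero]
    have hrec : ∀ k, (stirling2 (j+1) (k+1) : ℝ)
        = (k+1) * stirling2 j (k+1) + stirling2 j k := by
      intro k; push_cast [stirling2]; ring
    have hsub : ∀ k ∈ Finset.range (j+1), (-1:ℝ)^(j+1-(k+1)) * (stirling2 (j+1) (k+1) : ℝ) * P (k+1)
        = (-1:ℝ)^(j-k) * ((k:ℝ)+1) * (stirling2 j (k+1) : ℝ) * P (k+1)
          + (-1:ℝ)^(j-k) * (stirling2 j k : ℝ) * P (k+1) := by
      intro k hk
      have : j + 1 - (k+1) = j - k := by omega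
      rw [this, hrec]; push_cast; ring
    rw [Finset.sum_congr rfl hsub, Finset.sum_add_distrib]
    -- A := first sum, B := second sum
    have hA : ∑ k ∈ Finset.range (j+1), (-1:ℝ)^(j-k) * ((k:ℝ)+1) * (stirling2 j (k+1) : ℝ) * P (k+1)
        = ∑ k ∈ Finset.range j, (-1:ℝ)^(j-k) * ((k:ℝ)+1) * (stirling2 j (k+1) : ℝ) * P (k+1) := by
      rw [Finset.sum_range_succ, stirling2_eq_zero_of_lt j (j+1) (by omega)]
      simp
    -- use ih : ∑ = y^j
    have key : y ^ (j+1) = ∑ k ∈ Finset.range (j+1),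
        (-1:ℝ)^(j-k) * (stirling2 j k : ℝ) * (P (k+1) - (k:ℝ) * P k) := by
      have : ∀ k ∈ Finset.range (j+1), (-1:ℝ)^(j-k) * (stirling2 j k : ℝ) * (P (k+1) - (k:ℝ) * P k)
          = ((-1:ℝ)^(j-k) * (stirling2 j k : ℝ) * P k) * y := by
        intro k hk
        rw [hPsucc]; ring
      rw [Finset.sum_congr rfl this, ← Finset.sum_mul, ih, pow_succ]
    have hC : ∑ k ∈ Finset.range (j+1), (-1:ℝ)^(j-k) * (stirling2 j k : ℝ) * ((k:ℝ) * P k)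
        = - ∑ k ∈ Finset.range j, (-1:ℝ)^(j-k) * ((k:ℝ)+1) * (stirling2 j (k+1) : ℝ) * P (k+1) := by
      rw [Finset.sum_range_succ']
      have e0 : (-1:ℝ)^(j-0) * (stirling2 j 0 : ℝ) * ((0:ℕ) * P 0) = 0 := by simp
      rw [e0, add_zero, ← Finset.sum_neg_distrib]
      refine Finset.sum_congr rfl fun k hk => ?_
      have hk' : k < j := Finset.mem_range.mp hk
      have : j - k = (j - (k+1)) + 1 := by omega
      rw [this, pow_succ]
      push_cast; ring
    rw [key]
    have expand : ∑ k ∈ Finset.range (j+1), (-1:ℝ)^(j-k) * (stirling2 j k : ℝ) * (P (k+1) - (k:ℝ) * P k)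
        = ∑ k ∈ Finset.range (j+1), (-1:ℝ)^(j-k) * (stirling2 j k : ℝ) * P (k+1)
          - ∑ k ∈ Finset.range (j+1), (-1:ℝ)^(j-k) * (stirling2 j k : ℝ) * ((k:ℝ) * P k) := by
      rw [← Finset.sum_sub_distrib]
      exact Finset.sum_congr rfl fun k _ => by ring
    rw [expand, hA, hC]
    ring

lemma factorial_prod_aux (n : ℕ) (hn : 1 ≤ n) (k : ℕ) :
    Nat.factorial (n - 1 + k) = Nat.factorial (n - 1) * ∏ i ∈ Finset.range k, (n + i) := by
  induction k with
  | zero => simp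
  | succ k ih =>
    have : n - 1 + (k+1) = (n - 1 + k) + 1 := by omega
    rw [this, Nat.factorial_succ, ih, Finset.prod_range_succ]
    have : n - 1 + k + 1 = n + k := by omega
    rw [this]; ring

lemma eqOnIoc (a b : ℝ) : Set.EqOn (fun x : ℝ => ((x ^ (a-1) * (1-x) ^ (b-1) : ℝ) : ℂ))
    (fun x : ℝ => (x:ℂ) ^ ((a:ℂ)-1) * (1-(x:ℂ)) ^ ((b:ℂ)-1)) (Set.Ioc 0 1) := by
  intro x hx
  obtain ⟨hx0, hx1⟩ := hx
  simp only [Complex.ofReal_mul]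
  rw [Complex.ofReal_cpow hx0.le, Complex.ofReal_cpow (by linarith)]
  push_cast
  ring_nf

lemma betaIntegrand_integrable {a b : ℝ} (ha : 0 < a) (hb : 0 < b) :
    IntervalIntegrable (fun x : ℝ => x ^ (a-1) * (1-x) ^ (b-1)) volume 0 1 := by
  have h := Complex.betaIntegral_convergent (u := a) (v := b) (by simpa) (by simpa)
  rw [intervalIntegrable_iff] at h ⊢
  have h2 : IntegrableOn (fun x : ℝ => ((x ^ (a-1) * (1-x) ^ (b-1) : ℝ) : ℂ)) (Set.uIoc (0:ℝ) 1) volume := by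
    apply h.congr
    rw [Set.uIoc_of_le (by norm_num : (0:ℝ) ≤ 1)]
    exact ae_restrict_of_forall_mem measurableSet_Ioc fun x hx => ((eqOnIoc a b) hx).symm
  have h3 := h2.re
  apply h3.congr
  filter_upwards with x
  simp

noncomputable def rBeta (a b : ℝ) : ℝ := ∫ t in (0:ℝ)..1, t ^ (a-1) * (1-t) ^ (b-1)

lemma rBeta_eq {a b : ℝ} (ha : 0 < a) (hb : 0 < b) :
    rBeta a b = Real.Gamma a * Real.Gamma b / Real.Gamma (a+b) := by
  have key := Complex.Gamma_mul_Gamma_eq_betaIntegral (s := a) (t := b) (by simpa) (by simpa)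
  have hcb : Complex.betaIntegral a b = (rBeta a b : ℂ) := by
    rw [Complex.betaIntegral, rBeta, ← intervalIntegral.integral_ofReal]
    apply intervalIntegral.integral_congr_ae
    rw [Set.uIoc_of_le (by norm_num : (0:ℝ) ≤ 1)]
    exact Filter.Eventually.of_forall fun x hx => ((eqOnIoc a b) hx).symm
  rw [hcb, Complex.Gamma_ofReal, Complex.Gamma_ofReal, ← Complex.ofReal_add, Complex.Gamma_ofReal,
    ← Complex.ofReal_mul, ← Complex.ofReal_mul] at key
  have := Complex.ofReal_injective key
  have hg : Real.Gamma (a+b) ≠ 0 := (Real.Gamma_pos_of_pos (by linarith)).ne'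
  field_simp
  linarith [this]

lemma rBeta_pos {a b : ℝ} (ha : 0 < a) (hb : 0 < b) : 0 < rBeta a b := by
  rw [rBeta_eq ha hb]
  exact div_pos (mul_pos (Real.Gamma_pos_of_pos ha) (Real.Gamma_pos_of_pos hb))
    (Real.Gamma_pos_of_pos (by linarith))

lemma Gamma_add_nat_s15 {a : ℝ} (ha : 0 < a) (k : ℕ) :
    Real.Gamma (a + k) = Real.Gamma a * ∏ i ∈ Finset.range k, (a + i) := by
  induction k with
  | zero => simp
  | succ k ih =>
    have h1 : a + ((k:ℝ)+1) = (a + k) + 1 := by ring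
    push_cast
    rw [h1, Real.Gamma_add_one (by positivity), ih, Finset.prod_range_succ]
    push_cast; ring

lemma rBeta_ratio {a b : ℝ} (ha : 0 < a) (hb : 0 < b) (k : ℕ) :
    rBeta (a + k) b = rBeta a b * ∏ i ∈ Finset.range k, ((a + i) / (a + b + i)) := by
  rw [rBeta_eq (by positivity) hb, rBeta_eq ha hb]
  have h1 : a + (k:ℝ) + b = (a + b) + k := by ring
  rw [h1, Gamma_add_nat_s15 ha k, Gamma_add_nat_s15 (by linarith : 0 < a + b) k,
    Finset.prod_div_distrib]
  have hg : Real.Gamma (a+b) ≠ 0 := (Real.Gamma_pos_of_pos (by linarith)).ne'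
  have hp : ∏ i ∈ Finset.range k, (a + b + (i:ℝ)) ≠ 0 := by
    apply Finset.prod_ne_zero_iff.mpr
    intro i _; positivity
  field_simp

lemma moment_integral {a b : ℝ} (ha : 0 < a) (hb : 0 < b) (k : ℕ) :
    ∫ t in (0:ℝ)..1, t ^ (a-1) * (1-t) ^ (b-1) * t ^ k = rBeta (a + k) b := by
  rw [rBeta]
  apply intervalIntegral.integral_congr_ae
  rw [Set.uIoc_of_le (by norm_num : (0:ℝ) ≤ 1)]
  refine Filter.Eventually.of_forall fun x hx => ?_
  obtain ⟨hx0, hx1⟩ := hx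
  have : a + (k:ℝ) - 1 = (a - 1) + (k:ℝ) := by ring
  rw [this, Real.rpow_add hx0, Real.rpow_natCast]
  ring

lemma factR {n : ℕ} (hn : 1 ≤ n) (k : ℕ) :
    ((Nat.factorial (n - 1 + k) : ℝ) / (Nat.factorial (n - 1) : ℝ))
      = ∏ i ∈ Finset.range k, ((n:ℝ) + i) := by
  have h := factorial_prod_aux n hn k
  have hne : ((Nat.factorial (n-1) : ℝ)) ≠ 0 := by positivity
  rw [div_eq_iff hne]
  rw [h]
  push_cast
  ring

/-- Explicit formula for `𝔅̄ₙ⁻¹ e_j` in terms of Stirling numbers of the second kind. -/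
theorem betaOp_inverse_monomial (n : ℕ) (hn : 1 ≤ n) (j : ℕ) :
    ∀ x ∈ Set.Icc (0:ℝ) 1,
      betaOp n (fun t => (1 / (n : ℝ) ^ j) *
          ∑ k ∈ Finset.range (j + 1),
            (-1 : ℝ) ^ (j - k) *
              ((Nat.factorial (n - 1 + k) : ℝ) / (Nat.factorial (n - 1) : ℝ)) *
              (stirling2 j k : ℝ) * t ^ k) x
        = x ^ j := by
  have hnR : (0:ℝ) < n := by exact_mod_cast hn
  intro x hx
  obtain ⟨hx0, hx1⟩ := hx
  by_cases h0 : x = 0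
  · subst h0
    rw [betaOp, if_pos rfl]
    have hsum : ∑ k ∈ Finset.range (j + 1),
        (-1 : ℝ) ^ (j - k) *
          ((Nat.factorial (n - 1 + k) : ℝ) / (Nat.factorial (n - 1) : ℝ)) *
          (stirling2 j k : ℝ) * (0:ℝ) ^ k
        = (-1:ℝ)^j * (stirling2 j 0 : ℝ) := by
      rw [Finset.sum_eq_single 0]
      · simp [div_self (Nat.cast_ne_zero.mpr (Nat.factorial_ne_zero (n-1)) : ((Nat.factorial (n-1):ℝ)) ≠ 0)]
      · intro k _ hk
        rw [zero_pow hk, mul_zero]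
      · intro h; exact absurd (Finset.mem_range.mpr (by omega)) h
    rw [hsum]
    cases j with
    | zero => simp [stirling2]
    | succ m =>
      rw [show stirling2 (m+1) 0 = 0 from rfl]
      simp
  by_cases h1 : x = 1
  · subst h1
    rw [betaOp, if_neg (by norm_num), if_pos rfl]
    have hsum : ∑ k ∈ Finset.range (j + 1),
        (-1 : ℝ) ^ (j - k) *
          ((Nat.factorial (n - 1 + k) : ℝ) / (Nat.factorial (n - 1) : ℝ)) *
          (stirling2 j k : ℝ) * (1:ℝ) ^ k = (n:ℝ) ^ j := by
      rw [← stirling_rising j (n:ℝ)]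
      refine Finset.sum_congr rfl fun k _ => ?_
      rw [factR hn k, one_pow, mul_one]
      ring
    rw [hsum, one_pow]
    field_simp
  -- main case : 0 < x < 1
  have hx0' : 0 < x := lt_of_le_of_ne hx0 (Ne.symm h0)
  have hx1' : x < 1 := lt_of_le_of_ne hx1 h1
  rw [betaOp, if_neg h0, if_neg h1]
  set a : ℝ := (n:ℝ) * x with ha'
  set b : ℝ := (n:ℝ) * (1 - x) with hb'
  have ha : 0 < a := by positivity
  have hb : 0 < b := by
    rw [hb']; exact mul_pos hnR (by linarith)
  have hab : a + b = (n:ℝ) := by rw [ha', hb']; ring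
  set c : ℝ := 1 / (n:ℝ)^j with hc'
  set e : ℕ → ℝ := fun k => (-1 : ℝ) ^ (j - k) *
      ((Nat.factorial (n - 1 + k) : ℝ) / (Nat.factorial (n - 1) : ℝ)) *
      (stirling2 j k : ℝ) with he'
  -- rewrite the numerator integrand as a finite sum
  have hintegrand : ∀ t : ℝ, t ^ (a-1) * (1-t) ^ (b-1) *
      (c * ∑ k ∈ Finset.range (j+1), e k * t ^ k)
      = ∑ k ∈ Finset.range (j+1), (c * e k) * (t ^ (a-1) * (1-t) ^ (b-1) * t ^ k) := by
    intro t
    rw [Finset.mul_sum, Finset.mul_sum]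
    exact Finset.sum_congr rfl fun k _ => by ring
  have hik : ∀ k : ℕ, IntervalIntegrable
      (fun t : ℝ => t ^ (a-1) * (1-t) ^ (b-1) * t ^ k) volume 0 1 := by
    intro k
    have h := betaIntegrand_integrable (a := a + k) (by positivity) hb
    rw [intervalIntegrable_iff] at h ⊢
    refine h.congr_fun ?_ measurableSet_uIoc
    rw [Set.uIoc_of_le (by norm_num : (0:ℝ) ≤ 1)]
    intro t ht
    obtain ⟨ht0, ht1⟩ := ht
    dsimp only
    have : a + (k:ℝ) - 1 = (a - 1) + (k:ℝ) := by ring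
    rw [this, Real.rpow_add ht0, Real.rpow_natCast]
    ring
  have hnum : (∫ t in (0:ℝ)..1, t ^ (a-1) * (1-t) ^ (b-1) *
      (c * ∑ k ∈ Finset.range (j+1), e k * t ^ k))
      = ∑ k ∈ Finset.range (j+1), (c * e k) * rBeta (a + k) b := by
    simp only [hintegrand]
    rw [intervalIntegral.integral_finset_sum fun k _ => (hik k).const_mul (c * e k)]
    refine Finset.sum_congr rfl fun k _ => ?_
    rw [intervalIntegral.integral_const_mul, moment_integral ha hb]
  have hden : (∫ t in (0:ℝ)..1, t ^ (a-1) * (1-t) ^ (b-1)) = rBeta a b := rfl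
  have hgoal1 : (∫ t in (0:ℝ)..1, t ^ ((n:ℝ)*x - 1) * (1-t) ^ ((n:ℝ)*(1-x) - 1) *
        ((fun t => c * ∑ k ∈ Finset.range (j+1), e k * t ^ k) t))
      = ∑ k ∈ Finset.range (j+1), (c * e k) * rBeta (a + k) b := hnum
  rw [hgoal1, hden]
  -- now compute the sum
  have hsum2 : ∑ k ∈ Finset.range (j+1), (c * e k) * rBeta (a + k) b
      = (∑ k ∈ Finset.range (j+1), (c * e k) *
          ∏ i ∈ Finset.range k, ((a + i) / ((n:ℝ) + i))) * rBeta a b := by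
    rw [Finset.sum_mul]
    refine Finset.sum_congr rfl fun k _ => ?_
    rw [rBeta_ratio ha hb k, hab]
    ring
  rw [hsum2, mul_div_assoc, div_self (rBeta_pos ha hb).ne', mul_one]
  have hterm : ∀ k ∈ Finset.range (j+1), (c * e k) *
      ∏ i ∈ Finset.range k, ((a + i) / ((n:ℝ) + i))
      = c * ((-1:ℝ)^(j-k) * (stirling2 j k : ℝ) * ∏ i ∈ Finset.range k, (a + i)) := by
    intro k _
    have hpne : (∏ i ∈ Finset.range k, ((n:ℝ) + i)) ≠ 0 := by
      apply Finset.prod_ne_zero_iff.mpr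
      intro i _; positivity
    rw [he']
    simp only []
    rw [factR hn k, Finset.prod_div_distrib]
    field_simp
  rw [Finset.sum_congr rfl hterm, ← Finset.mul_sum, stirling_rising j a, ha', hc', mul_pow]
  field_simp
end
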